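/- arXiv:1606.09365 — 8 statements merged into one kernel-verified Lean document; each statement's English description precedes it below -/
import Mathlib

section
/- Let f : ℝ^n → ℝ be continuously differentiable, μ-strongly convex and L-smooth with 0 < μ < L. Let x* be a global minimizer of f with f* = f(x*). If x₁ is obtained from x₀ by one step of gradient descent with exact line search (i.e., x₁ = x₀ - γ∇f(x₀) where γ minimizes γ ↦ f(x₀ - γ∇f(x₀)) over γ ∈ ℝ), then f(x₁) - f* ≤ ((L-μ)/(L+μ))² (f(x₀) - f*). -/
open RealInnerProductSpace

section Aux

variable {E : Type*} [NormedAddCommGroup E] [InnerProductSpace ℝ E] [CompleteSpace E]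

/-- Derivative of a function along a line, in terms of its gradient. -/
lemma aux_hasDerivAt_line (f : E → ℝ) (g : E → E)
    (hg : ∀ x, HasGradientAt f (g x) x) (x v : E) (s : ℝ) :
    HasDerivAt (fun r : ℝ => f (x + r • v)) ⟪g (x + s • v), v⟫ s := by
  have h1 : HasDerivAt (fun r : ℝ => x + r • v) v s := by
    simpa using ((hasDerivAt_id s).smul_const v).const_add x
  have h2 := ((hg (x + s • v)).hasFDerivAt).comp_hasDerivAt s h1
  simp only [InnerProductSpace.toDual_apply_apply] at h2
  exact h2

/-- Descent lemma: quadratic upper bound from a Lipschitz gradient. -/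
lemma aux_descent (f : E → ℝ) (g : E → E) (C : ℝ) (hC : 0 < C)
    (hg : ∀ x, HasGradientAt f (g x) x)
    (hlip : ∀ x y, ‖g x - g y‖ ≤ C * ‖x - y‖) (x v : E) :
    f (x + v) ≤ f x + ⟪g x, v⟫ + C / 2 * ‖v‖ ^ 2 := by
  set χ : ℝ → ℝ := fun s => f (x + s • v) - s * ⟪g x, v⟫ - C * s ^ 2 / 2 * ‖v‖ ^ 2 with hχ
  have hdχ : ∀ s : ℝ, HasDerivAt χ (⟪g (x + s • v), v⟫ - ⟪g x, v⟫ - C * s * ‖v‖ ^ 2) s := by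
    intro s
    have h1 := aux_hasDerivAt_line f g hg x v s
    have h2 : HasDerivAt (fun r : ℝ => r * ⟪g x, v⟫) ⟪g x, v⟫ s := by
      simpa using (hasDerivAt_id s).mul_const ⟪g x, v⟫
    have h3 : HasDerivAt (fun r : ℝ => C * r ^ 2 / 2 * ‖v‖ ^ 2) (C * s * ‖v‖ ^ 2) s := by
      have hp : HasDerivAt (fun r : ℝ => r ^ 2) (2 * s) s := by
        simpa using hasDerivAt_pow 2 s
      have h4 := ((hp.const_mul C).div_const 2).mul_const (‖v‖ ^ 2)
      convert h4 using 1
      · rfl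
      · rfl
      · ring
    exact (h1.sub h2).sub h3
  have hmono : AntitoneOn χ (Set.Icc (0 : ℝ) 1) := by
    apply antitoneOn_of_deriv_nonpos (convex_Icc 0 1)
    · exact fun s _ => ((hdχ s).differentiableAt).continuousAt.continuousWithinAt
    · intro s _
      exact ((hdχ s).differentiableAt).differentiableWithinAt
    · intro s hs
      rw [interior_Icc] at hs
      rw [(hdχ s).deriv]
      have h4 : ⟪g (x + s • v) - g x, v⟫ ≤ ‖g (x + s • v) - g x‖ * ‖v‖ :=
        real_inner_le_norm _ _
      have h5 : ‖g (x + s • v) - g x‖ ≤ C * ‖x + s • v - x‖ := hlip _ _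
      have h6 : ‖x + s • v - x‖ = s * ‖v‖ := by
        rw [add_sub_cancel_left, norm_smul, Real.norm_eq_abs, abs_of_pos hs.1]
      rw [h6] at h5
      have h7 : ‖g (x + s • v) - g x‖ * ‖v‖ ≤ C * (s * ‖v‖) * ‖v‖ :=
        mul_le_mul_of_nonneg_right h5 (norm_nonneg v)
      rw [inner_sub_left] at h4
      nlinarith [h4, h7]
  have h01 := hmono (Set.left_mem_Icc.2 zero_le_one) (Set.right_mem_Icc.2 zero_le_one)
    zero_le_one
  simp only [hχ, one_smul, zero_smul, add_zero, one_pow, zero_pow, one_mul, zero_mul,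
    mul_zero, sub_zero, zero_div] at h01
  linarith [h01]

/-- Gradient inequality for a `μ`-strongly convex function. -/
lemma aux_convex_grad (f : E → ℝ) (g : E → E) (μ : ℝ)
    (hg : ∀ x, HasGradientAt f (g x) x)
    (hconv : ConvexOn ℝ Set.univ (fun z => f z - μ / 2 * ‖z‖ ^ 2)) (x y : E) :
    (f x - μ / 2 * ‖x‖ ^ 2) + (⟪g x, y - x⟫ - μ * ⟪x, y - x⟫) ≤ f y - μ / 2 * ‖y‖ ^ 2 := by
  set d := y - x with hd
  have hline : ∀ s : ℝ, HasDerivAt (fun r : ℝ => f (x + r • d) - μ / 2 * ‖x + r • d‖ ^ 2)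
      (⟪g (x + s • d), d⟫ - μ * ⟪x + s • d, d⟫) s := by
    intro s
    have h1 := aux_hasDerivAt_line f g hg x d s
    have hc : HasDerivAt (fun r : ℝ => x + r • d) d s := by
      simpa using ((hasDerivAt_id s).smul_const d).const_add x
    have h2 : HasDerivAt (fun r : ℝ => ⟪x + r • d, x + r • d⟫)
        (⟪x + s • d, d⟫ + ⟪d, x + s • d⟫) s := hc.inner ℝ hc
    simp_rw [real_inner_self_eq_norm_sq] at h2
    have h3 := h2.const_mul (μ / 2)
    have h4 := h1.sub h3
    convert h4 using 1
    · rfl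
    · rfl
    · rfl
    rw [real_inner_comm d (x + s • d)]
    ring
  have hφ : ConvexOn ℝ Set.univ (fun r : ℝ => f (x + r • d) - μ / 2 * ‖x + r • d‖ ^ 2) := by
    have haff := hconv.comp_affineMap (AffineMap.lineMap x y (k := ℝ))
    have heq : (fun r : ℝ => f (x + r • d) - μ / 2 * ‖x + r • d‖ ^ 2) =
        (fun z => f z - μ / 2 * ‖z‖ ^ 2) ∘ (AffineMap.lineMap x y (k := ℝ)) := by
      funext r
      simp only [Function.comp_apply, AffineMap.lineMap_apply, vsub_eq_sub, vadd_eq_add, hd]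
      rw [add_comm]
    rw [heq]
    simpa using haff
  have hslope := hφ.le_slope_of_hasDerivAt (Set.mem_univ (0 : ℝ)) (Set.mem_univ (1 : ℝ))
    zero_lt_one (hline 0)
  rw [slope_def_field] at hslope
  simp only [zero_smul, add_zero, one_smul, sub_zero, div_one] at hslope
  have hxy : x + d = y := by rw [hd]; abel
  rw [hxy] at hslope
  linarith [hslope]

/-- Interpolation inequality for smooth strongly convex functions (scaled form). -/
lemma aux_interp (f : E → ℝ) (g : E → E) (μ L : ℝ) (hμ : 0 < μ) (hμL : μ < L)
    (hg : ∀ x, HasGradientAt f (g x) x)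
    (hconv : ConvexOn ℝ Set.univ (fun z => f z - μ / 2 * ‖z‖ ^ 2))
    (hlip : ∀ x y, ‖g x - g y‖ ≤ L * ‖x - y‖) (x y : E) :
    2 * (L - μ) * (f x - f y + ⟪g x, y - x⟫) + μ * (L - μ) * ‖y - x‖ ^ 2
      + ‖g y - g x - μ • (y - x)‖ ^ 2 ≤ 0 := by
  have hM : (0 : ℝ) < L - μ := sub_pos.2 hμL
  have hL : (0 : ℝ) < L := hμ.trans hμL
  set D := g y - g x - μ • (y - x) with hD
  obtain ⟨r, hr, hr2⟩ : ∃ r : ℝ, 0 < r ∧ (L - μ) * r = 1 :=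
    ⟨1 / (L - μ), by positivity, by field_simp⟩
  set v : E := (-r) • D with hv
  -- quadratic upper bound for h := f - μ/2‖·‖² at the point y with increment v
  have hub : f (y + v) - μ / 2 * ‖y + v‖ ^ 2 ≤
      (f y - μ / 2 * ‖y‖ ^ 2) + (⟪g y, v⟫ - μ * ⟪y, v⟫) + (L - μ) / 2 * ‖v‖ ^ 2 := by
    have h1 := aux_descent f g L hL hg hlip y v
    have h2 : ‖y + v‖ ^ 2 = ‖y‖ ^ 2 + 2 * ⟪y, v⟫ + ‖v‖ ^ 2 := norm_add_sq_real y v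
    rw [h2]
    linarith [h1]
  -- gradient inequality from x to y + v
  have hcg := aux_convex_grad f g μ hg hconv x (y + v)
  -- expand inner products
  have he1 : ⟪g x, y + v - x⟫ = ⟪g x, y - x⟫ + ⟪g x, v⟫ := by
    rw [show y + v - x = (y - x) + v by abel, inner_add_right]
  have he2 : ⟪x, y + v - x⟫ = ⟪x, y - x⟫ + ⟪x, v⟫ := by
    rw [show y + v - x = (y - x) + v by abel, inner_add_right]
  rw [he1, he2] at hcg
  -- combine the two inequalities
  have hkey : (f x - μ / 2 * ‖x‖ ^ 2) + (⟪g x, y - x⟫ - μ * ⟪x, y - x⟫) ≤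
      (f y - μ / 2 * ‖y‖ ^ 2) + ((⟪g y, v⟫ - ⟪g x, v⟫) - μ * (⟪y, v⟫ - ⟪x, v⟫))
        + (L - μ) / 2 * ‖v‖ ^ 2 := by linarith [hcg, hub]
  -- the G-difference identity
  have hGD : (⟪g y, v⟫ - ⟪g x, v⟫) - μ * (⟪y, v⟫ - ⟪x, v⟫) = ⟪D, v⟫ := by
    rw [hD]
    simp only [inner_sub_left, real_inner_smul_left]
    try ring
  rw [hGD] at hkey
  have hDv : ⟪D, v⟫ = -r * ⟪D, D⟫ := by
    rw [hv, real_inner_smul_right]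
  have hvn : ‖v‖ ^ 2 = r ^ 2 * ‖D‖ ^ 2 := by
    rw [hv, norm_smul, Real.norm_eq_abs, abs_neg, abs_of_pos hr, mul_pow]
  have hDD : ⟪D, D⟫ = ‖D‖ ^ 2 := real_inner_self_eq_norm_sq D
  rw [hDv, hDD, hvn] at hkey
  -- hkey : hx + ⟪gx, y-x⟫-μ⟪x,y-x⟫ ≤ hy - r‖D‖² + (L-μ)/2 r² ‖D‖²
  -- relate h-difference to f-difference
  have hy2 : ‖y‖ ^ 2 = ‖x‖ ^ 2 + 2 * ⟪x, y - x⟫ + ‖y - x‖ ^ 2 := by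
    have := norm_add_sq_real x (y - x)
    rw [show x + (y - x) = y by abel] at this
    exact this
  -- multiply hkey by 2(L-μ) and use (L-μ)r = 1
  have hmul := mul_le_mul_of_nonneg_left hkey (by positivity : (0:ℝ) ≤ 2 * (L - μ))
  have hcoef : 2 * (L - μ) * ((f y - μ / 2 * ‖y‖ ^ 2) + (-r * ‖D‖ ^ 2)
      + (L - μ) / 2 * (r ^ 2 * ‖D‖ ^ 2)) =
      2 * (L - μ) * (f y - μ / 2 * ‖y‖ ^ 2) - ‖D‖ ^ 2 := by
    linear_combination (‖D‖ ^ 2 * ((L - μ) * r - 1)) * hr2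
  rw [hcoef] at hmul
  -- final algebra
  have hy2' : μ * (L - μ) * ‖y‖ ^ 2 =
      μ * (L - μ) * (‖x‖ ^ 2 + 2 * ⟪x, y - x⟫ + ‖y - x‖ ^ 2) := by rw [hy2]
  linarith [hmul, hy2']

end Aux

/-- `f` is continuously differentiable, `μ`-strongly convex and `L`-smooth on `ℝⁿ`. -/
def SmoothStronglyConvex {n : ℕ} (μ L : ℝ) (f : EuclideanSpace ℝ (Fin n) → ℝ) : Prop :=
  ContDiff ℝ 1 f ∧
  ConvexOn ℝ Set.univ (fun x => f x - μ / 2 * ‖x‖ ^ 2) ∧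
  ∀ x y : EuclideanSpace ℝ (Fin n), ‖gradient f x - gradient f y‖ ≤ L * ‖x - y‖

theorem stmt0 {n : ℕ} (μ L : ℝ) (hμ : 0 < μ) (hμL : μ < L)
    (f : EuclideanSpace ℝ (Fin n) → ℝ) (hf : SmoothStronglyConvex μ L f)
    (xstar : EuclideanSpace ℝ (Fin n)) (hmin : ∀ x, f xstar ≤ f x)
    (x₀ x₁ : EuclideanSpace ℝ (Fin n)) (γ : ℝ)
    (hγ : ∀ γ' : ℝ, f (x₀ - γ • gradient f x₀) ≤ f (x₀ - γ' • gradient f x₀))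
    (hx₁ : x₁ = x₀ - γ • gradient f x₀) :
    f x₁ - f xstar ≤ ((L - μ) / (L + μ)) ^ 2 * (f x₀ - f xstar) := by
  obtain ⟨hcd, hconv, hlip⟩ := hf
  have hg : ∀ x, HasGradientAt f (gradient f x) x :=
    fun x => (hcd.differentiable one_ne_zero x).hasGradientAt
  have hM : (0 : ℝ) < L - μ := sub_pos.2 hμL
  have hLμ : (0 : ℝ) < L + μ := by linarith
  obtain ⟨t, ht, ht2⟩ : ∃ t : ℝ, 0 < t ∧ (L + μ) * t = 2 :=
    ⟨2 / (L + μ), by positivity, by field_simp⟩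
  set g₀ := gradient f x₀ with hg₀
  set y := x₀ - t • g₀ with hy
  set gy := gradient f y with hgy
  set u := x₀ - xstar with hu
  have hstep : f x₁ ≤ f y := by rw [hx₁, hy]; exact hγ t
  -- gradient vanishes at the minimizer
  have hgs : gradient f xstar = 0 := by
    have hloc : IsLocalMin f xstar := Filter.Eventually.of_forall hmin
    have h0 := hloc.hasFDerivAt_eq_zero (hg xstar).hasFDerivAt
    have h1 := congrArg (InnerProductSpace.toDual ℝ (EuclideanSpace ℝ (Fin n))).symm h0
    simpa [gradient] using h1
  -- the three interpolation inequalities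
  have I1 := aux_interp f (gradient f) μ L hμ hμL hg hconv hlip y x₀
  have I2 := aux_interp f (gradient f) μ L hμ hμL hg hconv hlip x₀ xstar
  have I3 := aux_interp f (gradient f) μ L hμ hμL hg hconv hlip y xstar
  have e1 : x₀ - y = t • g₀ := by rw [hy]; abel
  have e2 : xstar - x₀ = -u := by rw [hu]; abel
  have e3 : xstar - y = t • g₀ - u := by rw [hy, hu]; abel
  rw [e1] at I1
  rw [e2, hgs] at I2
  rw [e3, hgs] at I3
  simp only [← hg₀, ← hgy] at I1 I2 I3
  simp only [← real_inner_self_eq_norm_sq] at I1 I2 I3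
  simp only [inner_sub_left, inner_sub_right, inner_add_left, inner_add_right,
    real_inner_smul_left, real_inner_smul_right, inner_neg_left, inner_neg_right,
    inner_zero_left, inner_zero_right, zero_sub, sub_zero, sub_neg_eq_add, neg_neg,
    zero_smul, smul_zero, neg_zero, zero_add, add_zero] at I1 I2 I3
  have hw : (0:ℝ) ≤ ⟪g₀ + gy - (μ * L * t) • u, g₀ + gy - (μ * L * t) • u⟫ :=
    real_inner_self_nonneg
  simp only [inner_sub_left, inner_sub_right, inner_add_left, inner_add_right,
    real_inner_smul_left, real_inner_smul_right] at hw
  have cm1 : ⟪g₀, u⟫ = ⟪u, g₀⟫ := real_inner_comm _ _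
  have cm2 : ⟪gy, u⟫ = ⟪u, gy⟫ := real_inner_comm _ _
  have cm3 : ⟪gy, g₀⟫ = ⟪g₀, gy⟫ := real_inner_comm _ _
  simp only [cm1, cm2, cm3] at I1 I2 I3 hw
  have hz : (L + μ) * t - 2 = 0 := by linarith
  have hQ : (-2*L^2*⟪g₀, gy⟫ - 2*μ*L*⟪g₀, gy⟫ - 2*μ*L^2*⟪u, gy⟫ - 2*μ*L^2*⟪u, g₀⟫
      - μ*L^2*t*⟪g₀, g₀⟫ - 2*μ^2*⟪g₀, g₀⟫ - 2*μ^2*L*⟪u, gy⟫ + 2*μ^2*L*⟪u, g₀⟫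
      - μ^2*L*t*⟪g₀, g₀⟫ + 2*μ^2*L^2*⟪u, u⟫ + μ^2*L^3*t*⟪u, u⟫ + μ^3*L^2*t*⟪u, u⟫)
      * ((L + μ) * t - 2) = 0 := mul_eq_zero_of_right _ hz
  have T1 := mul_nonneg (mul_nonneg hM.le hLμ.le) (neg_nonneg.mpr I1)
  have T2 := mul_nonneg (by positivity : (0:ℝ) ≤ 2 * μ * (L - μ)) (neg_nonneg.mpr I2)
  have T3 := mul_nonneg (by positivity : (0:ℝ) ≤ 2 * μ * (L + μ)) (neg_nonneg.mpr I3)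
  have Tw := mul_nonneg (by positivity : (0:ℝ) ≤ (L + μ)^2) hw
  have key : 2 * (L - μ) * ((L + μ) ^ 2 * (f y - f xstar)) ≤
      2 * (L - μ) * ((L - μ) ^ 2 * (f x₀ - f xstar)) := by
    linarith [T1, T2, T3, Tw, hQ, cm1, cm2, cm3]
  have hkey2 : (L + μ) ^ 2 * (f y - f xstar) ≤ (L - μ) ^ 2 * (f x₀ - f xstar) :=
    (mul_le_mul_iff_right₀ (by positivity : (0:ℝ) < 2 * (L - μ))).mp key
  have hfin : f y - f xstar ≤ ((L - μ) / (L + μ)) ^ 2 * (f x₀ - f xstar) := by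
    rw [div_pow, div_mul_eq_mul_div, le_div_iff₀ (by positivity : (0:ℝ) < (L + μ)^2)]
    linarith [hkey2]
  linarith [hstep, hfin]
end

section
/- Let f ∈ F_{μ,L}(ℝ^n) with 0 < μ < L, x* a global minimizer of f, f* = f(x*), and x₀ ∈ ℝ^n arbitrary. Then for every N ≥ ⌈(1/2)log(1/ε)/log((L+μ)/(L-μ))⌉ with ε > 0, the N-th iterate x_N of gradient descent with exact line search started at x₀ satisfies (f(x_N) - f*)/(f(x₀) - f*) ≤ ε (assuming f(x₀) > f*). -/
set_option maxHeartbeats 1000000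

open RealInnerProductSpace

section helpers

variable {E : Type*} [NormedAddCommGroup E] [InnerProductSpace ℝ E] [CompleteSpace E]

/-- derivative along a line -/
lemma hasDerivAt_line (f : E → ℝ) (hf : Differentiable ℝ f) (x d : E) (t : ℝ) :
    HasDerivAt (fun s : ℝ => f (x + s • d)) ⟪gradient f (x + t • d), d⟫ t := by
  have hc : HasDerivAt (fun s : ℝ => x + s • d) d t := by
    simpa using ((hasDerivAt_id t).smul_const d).const_add x
  have hg : HasGradientAt f (gradient f (x + t • d)) (x + t • d) :=
    (hf (x + t • d)).hasGradientAt
  have h2 := hg.hasFDerivAt.comp_hasDerivAt t hc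
  simpa [InnerProductSpace.toDual_apply_apply, Function.comp_def] using h2

/-- descent upper bound from Lipschitz gradient -/
lemma descent_upper (f : E → ℝ) (L : ℝ) (hL : 0 < L) (hf : Differentiable ℝ f)
    (hlip : ∀ a b : E, ‖gradient f a - gradient f b‖ ≤ L * ‖a - b‖) (x y : E) :
    f y ≤ f x + ⟪gradient f x, y - x⟫ + L / 2 * ‖y - x‖ ^ 2 := by
  set d := y - x with hd
  set A := ⟪x, d⟫ with hA
  set B := ‖d‖ ^ 2 with hB
  set φ : ℝ → ℝ := fun t => L / 2 * (‖x‖ ^ 2 + 2 * t * A + t ^ 2 * B) - f (x + t • d) with hφ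
  have hder : ∀ t : ℝ, HasDerivAt φ
      (L * (A + t * B) - ⟪gradient f (x + t • d), d⟫) t := by
    intro t
    have h1 : HasDerivAt (fun s : ℝ => L / 2 * (‖x‖ ^ 2 + 2 * s * A + s ^ 2 * B))
        (L / 2 * (2 * A + 2 * t * B)) t := by
      have hpoly : HasDerivAt (fun s : ℝ => ‖x‖ ^ 2 + 2 * s * A + s ^ 2 * B)
          (2 * A + 2 * t * B) t := by
        have p1 : HasDerivAt (fun s : ℝ => 2 * s * A) (2 * A) t := by
          simpa [mul_comm, mul_assoc] using ((hasDerivAt_id t).const_mul 2).mul_const A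
        have p2 : HasDerivAt (fun s : ℝ => s ^ 2 * B) (2 * t * B) t := by
          simpa using (hasDerivAt_pow 2 t).mul_const B
        exact (p1.const_add (‖x‖ ^ 2)).add p2
      simpa using hpoly.const_mul (L / 2)
    have h2 := hasDerivAt_line f hf x d t
    have := h1.sub h2
    convert this using 1
    case e'_9 => ring
    all_goals rfl
  have hmono : ∀ c ∈ Set.Ioo (0:ℝ) 1,
      L * (A + 0 * B) - ⟪gradient f (x + (0:ℝ) • d), d⟫ ≤
      L * (A + c * B) - ⟪gradient f (x + c • d), d⟫ := by
    intro c hc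
    have hinner : ⟪gradient f (x + c • d) - gradient f (x + (0:ℝ) • d), d⟫ ≤ L * c * B := by
      calc ⟪gradient f (x + c • d) - gradient f (x + (0:ℝ) • d), d⟫
          ≤ ‖gradient f (x + c • d) - gradient f (x + (0:ℝ) • d)‖ * ‖d‖ :=
            real_inner_le_norm _ _
        _ ≤ (L * ‖(x + c • d) - (x + (0:ℝ) • d)‖) * ‖d‖ := by
            have := hlip (x + c • d) (x + (0:ℝ) • d)
            exact mul_le_mul_of_nonneg_right this (norm_nonneg d)
        _ = L * c * B := by
            have h0 : (x + c • d) - (x + (0:ℝ) • d) = c • d := by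
              simp
            rw [h0, norm_smul]
            simp [hB, abs_of_pos hc.1]
            ring
    have hsub : ⟪gradient f (x + c • d), d⟫ - ⟪gradient f (x + (0:ℝ) • d), d⟫ ≤ L * c * B := by
      rw [← inner_sub_left]; exact hinner
    nlinarith [hsub]
  obtain ⟨c, hc, hceq⟩ := exists_hasDerivAt_eq_slope φ
    (fun t => L * (A + t * B) - ⟪gradient f (x + t • d), d⟫) one_pos
    (fun t _ => (hder t).continuousAt.continuousWithinAt)
    (fun t _ => hder t)
  have hkey : L * (A + 0 * B) - ⟪gradient f (x + (0:ℝ) • d), d⟫ ≤ φ 1 - φ 0 := by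
    rw [show φ 1 - φ 0 = (φ 1 - φ 0) / (1 - 0) by norm_num, ← hceq]
    exact hmono c hc
  have h10 : x + (1:ℝ) • d = y := by rw [one_smul, hd]; abel
  have h00 : x + (0:ℝ) • d = x := by simp
  rw [h00] at hkey
  have h10' : x + d = y := by rw [hd]; abel
  have hφ1 : φ 1 = L / 2 * (‖x‖ ^ 2 + 2 * A + B) - f y := by
    rw [hφ]; simp [h10']
  have hφ0 : φ 0 = L / 2 * ‖x‖ ^ 2 - f x := by
    rw [hφ]; simp [h00]
  rw [hφ1, hφ0] at hkey
  nlinarith [hkey]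


lemma strong_lower (f : E → ℝ) (μ : ℝ) (hf : Differentiable ℝ f)
    (hconv : ConvexOn ℝ Set.univ (fun z => f z - μ / 2 * ‖z‖ ^ 2)) (x y : E) :
    f x + ⟪gradient f x, y - x⟫ + μ / 2 * ‖y - x‖ ^ 2 ≤ f y := by
  set d := y - x with hd
  set A := ⟪x, d⟫ with hA
  set B := ‖d‖ ^ 2 with hB
  set h : E → ℝ := fun z => f z - μ / 2 * ‖z‖ ^ 2 with hh
  set φ : ℝ → ℝ := fun t => f (x + t • d) - μ / 2 * (‖x‖ ^ 2 + 2 * t * A + t ^ 2 * B) with hφ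
  have hnorm : ∀ t : ℝ, ‖x + t • d‖ ^ 2 = ‖x‖ ^ 2 + 2 * t * A + t ^ 2 * B := by
    intro t
    rw [norm_add_sq_real, real_inner_smul_right, norm_smul]
    simp [hA, hB, mul_pow, sq_abs]
    ring
  have hφh : ∀ t : ℝ, φ t = h (x + t • d) := by
    intro t; rw [hφ, hh]; simp only []; rw [hnorm t]
  have hder : HasDerivAt φ (⟪gradient f x, d⟫ - μ * A) 0 := by
    have h1 := hasDerivAt_line f hf x d 0
    rw [show x + (0:ℝ) • d = x by simp] at h1
    have h2 : HasDerivAt (fun t : ℝ => μ / 2 * (‖x‖ ^ 2 + 2 * t * A + t ^ 2 * B))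
        (μ / 2 * (2 * A + 2 * 0 * B)) 0 := by
      have p1 : HasDerivAt (fun s : ℝ => 2 * s * A) (2 * A) 0 := by
        simpa [mul_comm, mul_assoc] using ((hasDerivAt_id (0:ℝ)).const_mul 2).mul_const A
      have p2 : HasDerivAt (fun s : ℝ => s ^ 2 * B) (2 * 0 * B) 0 := by
        simpa using (hasDerivAt_pow 2 (0:ℝ)).mul_const B
      exact ((p1.const_add (‖x‖ ^ 2)).add p2).const_mul (μ / 2)
    have := h1.sub h2
    convert this using 1
    case e'_9 => ring
    all_goals rfl
  have hslope : ∀ t ∈ Set.Ioc (0:ℝ) 1, slope φ 0 t ≤ h y - h x := by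
    intro t ht
    have hcomb := hconv.2 (Set.mem_univ x) (Set.mem_univ y)
      (by linarith [ht.2] : (0:ℝ) ≤ 1 - t) (le_of_lt ht.1) (by ring)
    have hpt : (1 - t) • x + t • y = x + t • d := by
      rw [hd]; module
    rw [hpt] at hcomb
    have hφt : φ t ≤ (1 - t) * h x + t * h y := by rw [hφh t]; exact hcomb
    have hφ0 : φ 0 = h x := by rw [hφh 0]; simp
    rw [slope_def_field, sub_zero, div_le_iff₀ ht.1]
    rw [hφ0] at *
    nlinarith [hφt]
  have htend : Filter.Tendsto (slope φ 0) (nhdsWithin 0 (Set.Ioi 0)) (nhds (⟪gradient f x, d⟫ - μ * A)) := by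
    have := hasDerivAt_iff_tendsto_slope.1 hder
    exact this.mono_left (nhdsWithin_mono 0 (fun z hz => ne_of_gt hz))
  have hle : ⟪gradient f x, d⟫ - μ * A ≤ h y - h x := by
    refine le_of_tendsto htend ?_
    filter_upwards [Ioc_mem_nhdsGT one_pos] with t ht
    exact hslope t ht
  have hhy : h y = f y - μ / 2 * (‖x‖ ^ 2 + 2 * A + B) := by
    rw [hh]; simp only []
    have : y = x + (1:ℝ) • d := by rw [hd]; module
    rw [this, hnorm 1]; ring_nf
  have hhx : h x = f x - μ / 2 * ‖x‖ ^ 2 := by rw [hh]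
  rw [hhy, hhx] at hle
  nlinarith [hle]


lemma interp (f : E → ℝ) (μ L : ℝ) (hμ : 0 < μ) (hμL : μ < L)
    (hf : Differentiable ℝ f)
    (hconv : ConvexOn ℝ Set.univ (fun z => f z - μ / 2 * ‖z‖ ^ 2))
    (hlip : ∀ a b : E, ‖gradient f a - gradient f b‖ ≤ L * ‖a - b‖) (a b : E) :
    L * (‖gradient f b - gradient f a‖ ^ 2 + μ * L * ‖b - a‖ ^ 2
        - 2 * μ * ⟪gradient f b - gradient f a, b - a⟫)
      ≤ 2 * L * (L - μ) * (f b - f a - ⟪gradient f a, b - a⟫) := by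
  have hL : 0 < L := lt_trans hμ hμL
  have hD : 0 < L - μ := by linarith
  set D := L - μ with hDdef
  set ga := gradient f a with hga
  set gb := gradient f b with hgb
  set d := b - a with hd
  set dg := gb - ga with hdg
  set w := dg - μ • d with hw
  set z := b - (1 / D) • w with hz
  have h1 := strong_lower f μ hf hconv a z
  have h2 := descent_upper f L hL hf hlip b z
  -- scalar abbreviations
  set A := ‖dg‖ ^ 2 with hAdef
  set B := ‖d‖ ^ 2 with hBdef
  set C := ⟪dg, d⟫ with hCdef
  set P := ⟪ga, d⟫ with hPdef
  set G1 := ⟪ga, w⟫ with hG1def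
  set G2 := ⟪gb, w⟫ with hG2def
  have ez1 : z - a = d - (1 / D) • w := by rw [hz, hd]; abel
  have ez2 : z - b = -((1 / D) • w) := by rw [hz]; abel
  have hwsq : ‖w‖ ^ 2 = A - 2 * μ * C + μ ^ 2 * B := by
    rw [hw, norm_sub_sq_real, real_inner_smul_right, norm_smul]
    rw [hAdef, hBdef, hCdef]
    simp [mul_pow, sq_abs]
    ring
  have e1 : ⟪ga, z - a⟫ = P - (1 / D) * G1 := by
    rw [ez1, inner_sub_right, real_inner_smul_right, hPdef, hG1def]
  have e2 : ⟪gb, z - b⟫ = -((1 / D) * G2) := by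
    rw [ez2, inner_neg_right, real_inner_smul_right, hG2def]
  have e3 : ‖z - b‖ ^ 2 = (1 / D) ^ 2 * (A - 2 * μ * C + μ ^ 2 * B) := by
    rw [ez2, norm_neg, norm_smul, mul_pow, Real.norm_eq_abs, sq_abs, hwsq]
  have e4 : ‖z - a‖ ^ 2 = B - 2 * (1 / D) * (C - μ * B) + (1 / D) ^ 2 * (A - 2 * μ * C + μ ^ 2 * B) := by
    rw [ez1, norm_sub_sq_real, real_inner_smul_right, norm_smul, mul_pow, Real.norm_eq_abs, sq_abs, hwsq]
    have : ⟪d, w⟫ = C - μ * B := by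
      rw [hw, inner_sub_right, real_inner_smul_right, real_inner_comm dg d, hCdef, hBdef,
        real_inner_self_eq_norm_sq]
    rw [this, hBdef]
    ring
  have eG : G2 - G1 = A - μ * C := by
    rw [hG1def, hG2def, ← inner_sub_left]
    rw [show gb - ga = dg from rfl, hw, inner_sub_right, real_inner_smul_right,
      hAdef, hCdef, real_inner_self_eq_norm_sq]
  rw [e1] at h1
  rw [e2, e3] at h2
  rw [e4] at h1
  have hcomb := le_trans h1 h2
  clear_value D ga gb d dg w z A B C P G1 G2
  have hDne : D ≠ 0 := ne_of_gt hD
  have hne : L - μ ≠ 0 := ne_of_gt (by linarith)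
  have hc2 : (L - μ) * (1 / D) ^ 2 = 1 / D := by
    rw [hDdef]; field_simp
  have hker : ∀ r : ℝ, (L - μ) * ((1 / D) ^ 2 * r) = (1 / D) * r := by
    intro r; rw [← mul_assoc, hc2]
  have eGc : (1 / D) * G2 - (1 / D) * G1 = (1 / D) * (A - μ * C) := by
    rw [← mul_sub, eG]
  have hkey2 : (1 / D) * (A / 2 - μ * C + μ ^ 2 * B / 2) + μ * B / 2 ≤ f b - f a - P := by
    linarith [hcomb, eGc, hker A, hker (μ * C), hker (μ ^ 2 * B)]
  have hker2 : ∀ r : ℝ, D * ((1 / D) * r) = r := by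
    intro r; rw [← mul_assoc]; field_simp
  have h6 := mul_le_mul_of_nonneg_left hkey2 (le_of_lt hD)
  have hkeyD : A / 2 - μ * C + μ ^ 2 * B / 2 + D * (μ * B / 2) ≤ D * (f b - f a - P) := by
    have i1 := hker2 A
    have i2 := hker2 (μ * C)
    have i3 := hker2 (μ ^ 2 * B)
    nlinarith [h6, i1, i2, i3]
  have h7 := mul_le_mul_of_nonneg_left hkeyD (by linarith : (0:ℝ) ≤ 2 * L)
  have hDB : μ * L * B * D = μ * L * B * (L - μ) := by rw [hDdef]
  nlinarith [h7, hDB]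

lemma expand4 (a b c e : ℝ) (u v g p : E) :
    ‖a • u + b • v + c • g + e • p‖ ^ 2 =
      a ^ 2 * ‖u‖ ^ 2 + b ^ 2 * ‖v‖ ^ 2 + c ^ 2 * ‖g‖ ^ 2 + e ^ 2 * ‖p‖ ^ 2
      + 2 * (a * b) * ⟪u, v⟫ + 2 * (a * c) * ⟪g, u⟫ + 2 * (a * e) * ⟪p, u⟫
      + 2 * (b * c) * ⟪g, v⟫ + 2 * (b * e) * ⟪p, v⟫ + 2 * (c * e) * ⟪g, p⟫ := by
  rw [← real_inner_self_eq_norm_sq]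
  simp only [inner_add_left, inner_add_right, real_inner_smul_left, real_inner_smul_right]
  rw [real_inner_comm u v, real_inner_comm g u, real_inner_comm g v, real_inner_comm p u,
    real_inner_comm p v, real_inner_comm g p]
  simp only [real_inner_self_eq_norm_sq]
  ring

lemma one_step (μ L F Fp : ℝ) (u v g p : E) (hμ : 0 < μ) (hμL : μ < L)
    (k1 : L * (‖g‖ ^ 2 + μ * L * ‖u‖ ^ 2 - 2 * μ * ⟪g, u⟫) ≤ 2 * L * (L - μ) * (-F + ⟪g, u⟫))
    (k3 : L * (‖p‖ ^ 2 + μ * L * ‖v‖ ^ 2 - 2 * μ * ⟪p, v⟫) ≤ 2 * L * (L - μ) * (-Fp + ⟪p, v⟫))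
    (k6 : L * (‖g - p‖ ^ 2 + μ * L * ‖u - v‖ ^ 2 - 2 * μ * ⟪g - p, u - v⟫)
        ≤ 2 * L * (L - μ) * (F - Fp - ⟪p, u - v⟫))
    (o1 : ⟪p, g⟫ = 0) (o2 : ⟪p, u - v⟫ = 0) :
    (L + μ) ^ 2 * Fp ≤ (L - μ) ^ 2 * F := by
  have hL : 0 < L := lt_trans hμ hμL
  have hD : 0 < L - μ := by linarith
  have o1' : ⟪g, p⟫ = 0 := by rw [real_inner_comm g p] at o1; exact o1
  have hpu : ⟪p, u⟫ = ⟪p, v⟫ := by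
    have := o2; rw [inner_sub_right] at this; linarith
  have hgp : ‖g - p‖ ^ 2 = ‖g‖ ^ 2 - 2 * ⟪g, p⟫ + ‖p‖ ^ 2 := norm_sub_sq_real g p
  have huv : ‖u - v‖ ^ 2 = ‖u‖ ^ 2 - 2 * ⟪u, v⟫ + ‖v‖ ^ 2 := norm_sub_sq_real u v
  have hiprod : ⟪g - p, u - v⟫ = ⟪g, u⟫ - ⟪g, v⟫ - ⟪p, u⟫ + ⟪p, v⟫ := by
    simp only [inner_sub_left, inner_sub_right]
    ring
  have ho2 : ⟪p, u - v⟫ = 0 := o2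
  rw [hgp, huv, hiprod, ho2, o1', hpu] at k6
  -- squares
  have s1 : (0:ℝ) ≤ ‖(μ * (L - μ)) • u + (μ * (L + μ)) • v + (-(L - μ)) • g + (-(L + μ)) • p‖ ^ 2 :=
    sq_nonneg _
  rw [expand4] at s1
  rw [o1', hpu] at s1
  have s2 : (0:ℝ) ≤ ‖(L + μ) • u + (-(L + μ)) • v + (-2 : ℝ) • g + (0:ℝ) • p‖ ^ 2 := sq_nonneg _
  rw [expand4] at s2
  rw [o1', hpu] at s2
  -- multiplied inequalities
  have t1 := mul_le_mul_of_nonneg_left k1 (le_of_lt (mul_pos hμ hD))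
  have t3 := mul_le_mul_of_nonneg_left k3 (le_of_lt (mul_pos hμ (by linarith : (0:ℝ) < L + μ)))
  have t6 := mul_le_mul_of_nonneg_left k6 (by positivity : (0:ℝ) ≤ (L - μ) * (L + μ) / 2)
  have s1' := mul_nonneg (by positivity : (0:ℝ) ≤ L / 2) s1
  have s2' := mul_nonneg (by positivity : (0:ℝ) ≤ μ * L * (L - μ) / 2) s2
  have big : L * (L - μ) * ((L + μ) ^ 2 * Fp) ≤ L * (L - μ) * ((L - μ) ^ 2 * F) := by
    nlinarith [t1, t3, t6, s1', s2']
  exact (mul_le_mul_iff_right₀ (mul_pos hL hD)).mp big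

end helpers

theorem stmt1 {n : ℕ} (μ L : ℝ) (hμ : 0 < μ) (hμL : μ < L)
    (f : EuclideanSpace ℝ (Fin n) → ℝ) (hf : SmoothStronglyConvex μ L f)
    (xstar : EuclideanSpace ℝ (Fin n)) (hmin : ∀ y, f xstar ≤ f y)
    (x : ℕ → EuclideanSpace ℝ (Fin n))
    (hiter : ∀ i : ℕ, ∃ γ : ℝ,
      (∀ γ' : ℝ, f (x i - γ • gradient f (x i)) ≤ f (x i - γ' • gradient f (x i))) ∧
      x (i + 1) = x i - γ • gradient f (x i))
    (hx₀ : f xstar < f (x 0))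
    (ε : ℝ) (hε : 0 < ε) (N : ℕ)
    (hN : ⌈(1 / 2 : ℝ) * Real.log (1 / ε) / Real.log ((L + μ) / (L - μ))⌉₊ ≤ N) :
    (f (x N) - f xstar) / (f (x 0) - f xstar) ≤ ε := by
  have hL : 0 < L := lt_trans hμ hμL
  have hD : 0 < L - μ := by linarith
  have hdiff : Differentiable ℝ f := hf.1.differentiable one_ne_zero
  have hconv := hf.2.1
  have hlip := hf.2.2
  -- gradient at the minimizer is zero
  have hlm : IsLocalMin f xstar := Filter.Eventually.of_forall hmin
  have hgrad0 : gradient f xstar = 0 := by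
    unfold gradient
    rw [hlm.fderiv_eq_zero]
    simp
  -- one step contraction
  have step : ∀ i : ℕ, (L + μ) ^ 2 * (f (x (i+1)) - f xstar) ≤ (L - μ) ^ 2 * (f (x i) - f xstar) := by
    intro i
    obtain ⟨γ, hγmin, hstep⟩ := hiter i
    set g := gradient f (x i) with hg
    set p := gradient f (x (i+1)) with hp
    set u := x i - xstar with hu
    set v := x (i+1) - xstar with hv
    -- orthogonality
    have hq : ∀ s : ℝ, x i - s • g = x i + s • (-g) := by
      intro s; rw [smul_neg, sub_eq_add_neg]
    have hderq : HasDerivAt (fun s : ℝ => f (x i + s • (-g))) ⟪gradient f (x i + γ • (-g)), -g⟫ γ :=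
      hasDerivAt_line f hdiff (x i) (-g) γ
    have hpt : x i + γ • (-g) = x (i+1) := by rw [← hq, hstep]
    rw [hpt] at hderq
    have hloc : IsLocalMin (fun s : ℝ => f (x i + s • (-g))) γ := by
      apply Filter.Eventually.of_forall
      intro s
      simp only [← hq]
      exact hγmin s
    have hzero := hloc.hasDerivAt_eq_zero hderq
    have o1 : ⟪p, g⟫ = 0 := by
      rw [inner_neg_right] at hzero
      rw [hp]; linarith [hzero]
    have huv : u - v = γ • g := by rw [hu, hv, hstep]; abel
    have o2 : ⟪p, u - v⟫ = 0 := by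
      rw [huv, real_inner_smul_right, o1, mul_zero]
    -- interpolation inequalities
    have k1raw := interp f μ L hμ hμL hdiff hconv hlip (x i) xstar
    have k3raw := interp f μ L hμ hμL hdiff hconv hlip (x (i+1)) xstar
    have k6raw := interp f μ L hμ hμL hdiff hconv hlip (x (i+1)) (x i)
    rw [hgrad0] at k1raw k3raw
    have e1 : xstar - x i = -u := by rw [hu]; abel
    have e2 : xstar - x (i+1) = -v := by rw [hv]; abel
    have e3 : x i - x (i+1) = u - v := by rw [hu, hv]; abel
    rw [e1, ← hg] at k1raw
    rw [e2, ← hp] at k3raw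
    rw [e3, ← hg, ← hp] at k6raw
    have k1 : L * (‖g‖ ^ 2 + μ * L * ‖u‖ ^ 2 - 2 * μ * ⟪g, u⟫)
        ≤ 2 * L * (L - μ) * (-(f (x i) - f xstar) + ⟪g, u⟫) := by
      have h0 : (0:EuclideanSpace ℝ (Fin n)) - g = -g := by abel
      rw [h0] at k1raw
      simp only [norm_neg, inner_neg_neg, inner_neg_right, inner_neg_left, neg_neg] at k1raw
      linarith [k1raw]
    have k3 : L * (‖p‖ ^ 2 + μ * L * ‖v‖ ^ 2 - 2 * μ * ⟪p, v⟫)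
        ≤ 2 * L * (L - μ) * (-(f (x (i+1)) - f xstar) + ⟪p, v⟫) := by
      have h0 : (0:EuclideanSpace ℝ (Fin n)) - p = -p := by abel
      rw [h0] at k3raw
      simp only [norm_neg, inner_neg_neg, inner_neg_right, inner_neg_left, neg_neg] at k3raw
      linarith [k3raw]
    have k6 : L * (‖g - p‖ ^ 2 + μ * L * ‖u - v‖ ^ 2 - 2 * μ * ⟪g - p, u - v⟫)
        ≤ 2 * L * (L - μ) * ((f (x i) - f xstar) - (f (x (i+1)) - f xstar) - ⟪p, u - v⟫) := by
      linarith [k6raw]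
    exact one_step μ L (f (x i) - f xstar) (f (x (i+1)) - f xstar) u v g p hμ hμL k1 k3 k6 o1 o2
  -- iterate
  set ρ : ℝ := (L - μ) / (L + μ) with hρ
  have hρpos : 0 < ρ := div_pos hD (by linarith)
  have hρlt : ρ < 1 := by
    rw [hρ, div_lt_one (by linarith : (0:ℝ) < L + μ)]; linarith
  have hcontr : ∀ i : ℕ, f (x (i+1)) - f xstar ≤ ρ ^ 2 * (f (x i) - f xstar) := by
    intro i
    have h1 := step i
    have h2 : (0:ℝ) < (L + μ) ^ 2 := by positivity
    rw [hρ, div_pow, div_mul_eq_mul_div, le_div_iff₀ h2]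
    calc (f (x (i+1)) - f xstar) * (L + μ) ^ 2 = (L + μ) ^ 2 * (f (x (i+1)) - f xstar) := by ring
      _ ≤ (L - μ) ^ 2 * (f (x i) - f xstar) := h1
  have hiterbound : ∀ m : ℕ, f (x m) - f xstar ≤ (ρ ^ 2) ^ m * (f (x 0) - f xstar) := by
    intro m
    induction m with
    | zero => simp
    | succ k ih =>
      calc f (x (k+1)) - f xstar ≤ ρ ^ 2 * (f (x k) - f xstar) := hcontr k
        _ ≤ ρ ^ 2 * ((ρ ^ 2) ^ k * (f (x 0) - f xstar)) :=
            mul_le_mul_of_nonneg_left ih (by positivity)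
        _ = (ρ ^ 2) ^ (k+1) * (f (x 0) - f xstar) := by ring
  have hF0 : 0 < f (x 0) - f xstar := by linarith [hx₀]
  -- power bound
  have hpow : (ρ ^ 2) ^ N ≤ ε := by
    rcases le_or_gt 1 ε with hε1 | hε1
    · calc (ρ ^ 2) ^ N ≤ 1 := by
            apply pow_le_one₀ (by positivity)
            nlinarith [hρpos, hρlt]
        _ ≤ ε := hε1
    · -- ε < 1 case
      set R : ℝ := (L + μ) / (L - μ) with hR
      have hR1 : 1 < R := by
        rw [hR, lt_div_iff₀ hD]; linarith
      have hlogR : 0 < Real.log R := Real.log_pos hR1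
      have hceil : ((1 / 2 : ℝ) * Real.log (1 / ε) / Real.log R : ℝ) ≤ (N : ℝ) := by
        calc ((1 / 2 : ℝ) * Real.log (1 / ε) / Real.log R : ℝ)
            ≤ (⌈(1 / 2 : ℝ) * Real.log (1 / ε) / Real.log R⌉₊ : ℝ) := Nat.le_ceil _
          _ ≤ (N : ℝ) := by exact_mod_cast hN
      have hlog : Real.log (1 / ε) ≤ 2 * (N : ℝ) * Real.log R := by
        rw [div_le_iff₀ hlogR] at hceil
        linarith [hceil]
      have hρR : ρ = R⁻¹ := by
        rw [hρ, hR]; field_simp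
      have hpowpos : (0:ℝ) < (ρ ^ 2) ^ N := by positivity
      rw [← Real.log_le_log_iff hpowpos hε]
      have hlogρ : Real.log ρ = -Real.log R := by
        rw [hρR, Real.log_inv]
      calc Real.log ((ρ ^ 2) ^ N) = (N : ℝ) * (2 * Real.log ρ) := by
            rw [Real.log_pow, Real.log_pow]; push_cast; ring
        _ = -(2 * (N : ℝ) * Real.log R) := by rw [hlogρ]; ring
        _ ≤ -(Real.log (1 / ε)) := by linarith [hlog]
        _ = Real.log ε := by rw [Real.log_div one_ne_zero (ne_of_gt hε), Real.log_one]; ring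
  -- conclude
  rw [div_le_iff₀ hF0]
  calc f (x N) - f xstar ≤ (ρ ^ 2) ^ N * (f (x 0) - f xstar) := hiterbound N
    _ ≤ ε * (f (x 0) - f xstar) := mul_le_mul_of_nonneg_right hpow (le_of_lt hF0)
end

section
/- Let Q be a symmetric positive definite n×n real matrix whose eigenvalues all lie in [μ, L] with 0 < μ ≤ L. Then for every unit vector x ∈ ℝ^n, (xᵀQx)(xᵀQ⁻¹x) ≤ (μ+L)²/(4μL). -/
open Matrix in
lemma kant_sum {n : ℕ} (μ L : ℝ) (hμ : 0 < μ) (hμL : μ ≤ L)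
    (lam c : Fin n → ℝ) (hc : ∀ i, 0 ≤ c i) (hsum : ∑ i, c i = 1)
    (hl : ∀ i, μ ≤ lam i ∧ lam i ≤ L) :
    (∑ i, c i * lam i) * (∑ i, c i * (lam i)⁻¹) ≤ (μ + L) ^ 2 / (4 * μ * L) := by
  have hL : 0 < L := hμ.trans_le hμL
  have hlp : ∀ i, 0 < lam i := fun i => hμ.trans_le (hl i).1
  set a := ∑ i, c i * lam i with ha_def
  set b := ∑ i, c i * (lam i)⁻¹ with hb_def
  have ha : 0 ≤ a := Finset.sum_nonneg fun i _ => mul_nonneg (hc i) (hlp i).le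
  have hb : 0 ≤ b := Finset.sum_nonneg fun i _ => mul_nonneg (hc i) (inv_nonneg.2 (hlp i).le)
  have key : a + μ * L * b ≤ μ + L := by
    have hpt : ∀ i, c i * lam i + μ * L * (c i * (lam i)⁻¹) ≤ c i * (μ + L) := by
      intro i
      have h1 : lam i + μ * L * (lam i)⁻¹ ≤ μ + L := by
        have h2 : μ * L * (lam i)⁻¹ ≤ μ + L - lam i := by
          rw [mul_inv_le_iff₀ (hlp i)]
          nlinarith [mul_nonneg (sub_nonneg.2 (hl i).1) (sub_nonneg.2 (hl i).2)]
        linarith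
      calc c i * lam i + μ * L * (c i * (lam i)⁻¹)
          = c i * (lam i + μ * L * (lam i)⁻¹) := by ring
        _ ≤ c i * (μ + L) := mul_le_mul_of_nonneg_left h1 (hc i)
    calc a + μ * L * b = ∑ i, (c i * lam i + μ * L * (c i * (lam i)⁻¹)) := by
          rw [ha_def, hb_def, Finset.mul_sum, ← Finset.sum_add_distrib]
      _ ≤ ∑ i, c i * (μ + L) := Finset.sum_le_sum fun i _ => hpt i
      _ = μ + L := by rw [← Finset.sum_mul, hsum, one_mul]
  rw [le_div_iff₀ (by positivity)]
  have h2 : (a + μ * L * b) ^ 2 ≤ (μ + L) ^ 2 := pow_le_pow_left₀ (by positivity) key 2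
  nlinarith [h2, sq_nonneg (a - μ * L * b)]

open Matrix in
theorem stmt7 {n : ℕ} (μ L : ℝ) (hμ : 0 < μ) (hμL : μ ≤ L)
    (Q : Matrix (Fin n) (Fin n) ℝ) (hQ : Q.IsHermitian) (hpd : Q.PosDef)
    (heig : ∀ i : Fin n, μ ≤ hQ.eigenvalues i ∧ hQ.eigenvalues i ≤ L)
    (x : Fin n → ℝ) (hx : ∑ i, x i ^ 2 = 1) :
    (x ⬝ᵥ Q.mulVec x) * (x ⬝ᵥ Q⁻¹.mulVec x) ≤ (μ + L) ^ 2 / (4 * μ * L) := by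
  set U : Matrix (Fin n) (Fin n) ℝ := (hQ.eigenvectorUnitary : Matrix (Fin n) (Fin n) ℝ) with hU
  set lam := hQ.eigenvalues with hlam
  have hstar : star U = Uᵀ := by ext i j; simp [Matrix.star_apply]
  set y : Fin n → ℝ := Uᵀ *ᵥ x with hy
  have hlp : ∀ i, 0 < lam i := fun i => hμ.trans_le (heig i).1
  have hUU : U * Uᵀ = 1 := by
    rw [← hstar]; exact (Matrix.mem_unitaryGroup_iff).mp hQ.eigenvectorUnitary.2
  have hUU' : Uᵀ * U = 1 := by
    rw [← hstar]; exact (Matrix.mem_unitaryGroup_iff').mp hQ.eigenvectorUnitary.2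
  have hspec : Q = U * diagonal lam * Uᵀ := by
    rw [← hstar]; simpa using hQ.spectral_theorem
  have hysum : ∑ i, y i ^ 2 = 1 := by
    have h : y ⬝ᵥ y = x ⬝ᵥ x := by
      rw [hy, mulVec_transpose, ← dotProduct_mulVec, ← mulVec_transpose, mulVec_mulVec, hUU,
        one_mulVec]
    calc ∑ i, y i ^ 2 = y ⬝ᵥ y := by simp [dotProduct, sq]
      _ = x ⬝ᵥ x := h
      _ = 1 := by simpa [dotProduct, sq] using hx
  have hform : ∀ d : Fin n → ℝ, x ⬝ᵥ (U * diagonal d * Uᵀ) *ᵥ x = ∑ i, d i * y i ^ 2 := by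
    intro d
    rw [← mulVec_mulVec, ← mulVec_mulVec, dotProduct_mulVec, ← mulVec_transpose, ← hy]
    simp only [dotProduct, mulVec_diagonal]
    exact Finset.sum_congr rfl fun i _ => by ring
  have hinv : Q⁻¹ = U * diagonal (fun i => (lam i)⁻¹) * Uᵀ := by
    apply inv_eq_right_inv
    calc Q * (U * diagonal (fun i => (lam i)⁻¹) * Uᵀ)
        = U * (diagonal lam * (Uᵀ * U) * diagonal (fun i => (lam i)⁻¹)) * Uᵀ := by
          rw [hspec]; noncomm_ring
      _ = U * Uᵀ := by
          rw [hUU', mul_one, diagonal_mul_diagonal]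
          have : (fun i => lam i * (lam i)⁻¹) = fun _ => (1 : ℝ) := by
            funext i; exact mul_inv_cancel₀ (hlp i).ne'
          rw [this, diagonal_one, mul_one]
      _ = 1 := hUU
  have e1 : x ⬝ᵥ Q.mulVec x = ∑ i, lam i * y i ^ 2 := by
    rw [show Q.mulVec x = (U * diagonal lam * Uᵀ) *ᵥ x by rw [← hspec]]
    exact hform lam
  have e2 : x ⬝ᵥ Q⁻¹.mulVec x = ∑ i, (lam i)⁻¹ * y i ^ 2 := by
    rw [show Q⁻¹.mulVec x = (U * diagonal (fun i => (lam i)⁻¹) * Uᵀ) *ᵥ x by rw [← hinv]]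
    exact hform _
  rw [e1, e2]
  have := kant_sum μ L hμ hμL lam (fun i => y i ^ 2) (fun i => sq_nonneg _) hysum heig
  calc (∑ i, lam i * y i ^ 2) * ∑ i, (lam i)⁻¹ * y i ^ 2
      = (∑ i, y i ^ 2 * lam i) * ∑ i, y i ^ 2 * (lam i)⁻¹ := by
        simp only [mul_comm]
    _ ≤ (μ + L) ^ 2 / (4 * μ * L) := this
end

section
/- Let f ∈ F_{μ,L}(ℝ^n) with 0 < μ < L, x* a global minimizer of f, f* = f(x*). The gradient method with fixed step length γ = 2/(μ+L), i.e., x_{i+1} = x_i - (2/(μ+L))∇f(x_i), satisfies f(x_{i+1}) - f* ≤ ((L-μ)/(L+μ))²(f(x_i) - f*) for all i ≥ 0. -/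
open RealInnerProductSpace Set

noncomputable section

section aux
variable {n : ℕ}
local notation "E" => EuclideanSpace ℝ (Fin n)

lemma line_hasDerivAt_aux8 {g : E → ℝ} {w : E} (v d : E) (t : ℝ)
    (hG : HasGradientAt g w (v + t • d)) :
    HasDerivAt (fun t : ℝ => g (v + t • d)) (⟪w, d⟫) t := by
  have hline : HasDerivAt (fun t : ℝ => v + t • d) d t := by
    simpa using ((hasDerivAt_id t).smul_const d).const_add v
  have := (hG.hasFDerivAt).comp_hasDerivAt t hline
  exact this

lemma convex_first_order_aux8 {g : E → ℝ} {G : E → E}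
    (hconv : ConvexOn ℝ Set.univ g) (hg : ∀ z, HasGradientAt g (G z) z) (u v : E) :
    g v + ⟪G v, u - v⟫ ≤ g u := by
  have hφ : ConvexOn ℝ Set.univ (fun t : ℝ => g (v + t • (u - v))) := by
    have hfun : (fun t : ℝ => g (v + t • (u - v)))
        = (g ∘ (AffineMap.lineMap v u : ℝ →ᵃ[ℝ] E)) := by
      funext t
      simp only [Function.comp_apply, AffineMap.lineMap_apply_module]
      congr 1
      module
    rw [hfun]
    simpa using hconv.comp_affineMap (AffineMap.lineMap v u : ℝ →ᵃ[ℝ] E)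
  have hd : HasDerivAt (fun t : ℝ => g (v + t • (u - v)))
      (⟪G (v + (0:ℝ) • (u - v)), u - v⟫) 0 :=
    line_hasDerivAt_aux8 v (u - v) 0 (hg _)
  have hslope := hφ.le_slope_of_hasDerivAt (mem_univ (0:ℝ)) (mem_univ (1:ℝ)) one_pos hd
  rw [slope_def_field] at hslope
  simp only [zero_smul, add_zero, one_smul] at hd hslope
  have h01 : v + (u - v) = u := by abel
  rw [h01] at hslope
  have : ⟪G v, u - v⟫ ≤ g u - g v := by simpa using hslope
  linarith

lemma descent_lemma_aux8 {L : ℝ} {f : E → ℝ} (hd : Differentiable ℝ f)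
    (hlip : ∀ a b : E, ‖gradient f a - gradient f b‖ ≤ L * ‖a - b‖)
    (u v : E) :
    f u ≤ f v + ⟪gradient f v, u - v⟫ + L / 2 * ‖u - v‖ ^ 2 := by
  set d := u - v with hdv
  set ψ : ℝ → ℝ := fun t =>
    L / 2 * t ^ 2 * ‖d‖ ^ 2 + f v + t * ⟪gradient f v, d⟫ - f (v + t • d) with hψ
  have hψd : ∀ t : ℝ, HasDerivAt ψ
      (L * t * ‖d‖ ^ 2 + ⟪gradient f v, d⟫ - ⟪gradient f (v + t • d), d⟫) t := by
    intro t
    have h1 : HasDerivAt (fun t : ℝ => L / 2 * t ^ 2 * ‖d‖ ^ 2 + f v + t * ⟪gradient f v, d⟫)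
        (L * t * ‖d‖ ^ 2 + ⟪gradient f v, d⟫) t := by
      have hp : HasDerivAt (fun t : ℝ => t ^ 2) (2 * t) t := by
        simpa using hasDerivAt_pow 2 t
      have := (((hp.const_mul (L / 2)).mul_const (‖d‖ ^ 2)).add_const (f v)).add
        ((hasDerivAt_id t).mul_const (⟪gradient f v, d⟫))
      exact this.congr_deriv (by ring)
    exact h1.sub (line_hasDerivAt_aux8 v d t (hd _).hasGradientAt)
  have hmono : MonotoneOn ψ (Icc (0:ℝ) 1) := by
    apply monotoneOn_of_deriv_nonneg (convex_Icc 0 1)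
    · exact fun t _ => ((hψd t).differentiableAt).continuousAt.continuousWithinAt
    · intro t _
      exact ((hψd t).differentiableAt).differentiableWithinAt
    · intro t ht
      rw [interior_Icc] at ht
      rw [(hψd t).deriv]
      have hineq : ⟪gradient f (v + t • d) - gradient f v, d⟫ ≤ L * t * ‖d‖ ^ 2 := by
        calc ⟪gradient f (v + t • d) - gradient f v, d⟫
            ≤ ‖gradient f (v + t • d) - gradient f v‖ * ‖d‖ := real_inner_le_norm _ _
          _ ≤ (L * ‖(v + t • d) - v‖) * ‖d‖ := by
              gcongr; exact hlip _ _
          _ = L * t * ‖d‖ ^ 2 := by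
              have : ‖(v + t • d) - v‖ = t * ‖d‖ := by
                simp [norm_smul, abs_of_pos ht.1]
              rw [this]; ring
      rw [inner_sub_left] at hineq
      linarith
  have h01 := hmono (left_mem_Icc.2 one_pos.le) (right_mem_Icc.2 one_pos.le) one_pos.le
  have hψ0 : ψ 0 = 0 := by simp [hψ]
  have hψ1 : ψ 1 = L / 2 * ‖d‖ ^ 2 + f v + ⟪gradient f v, d⟫ - f u := by
    simp only [hψ]
    rw [show v + (1:ℝ) • d = u from by rw [hdv]; module]
    ring
  rw [hψ0, hψ1] at h01
  linarith

lemma hasGradientAt_shift_aux8 {μ : ℝ} {f : E → ℝ} (hd : Differentiable ℝ f) (z : E) :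
    HasGradientAt (fun z : E => f z - μ / 2 * ‖z‖ ^ 2) (gradient f z - μ • z) z := by
  have hsq : HasFDerivAt (fun z : E => μ / 2 * ‖z‖ ^ 2)
      ((μ / 2) • ((fderivInnerCLM ℝ ((z : E), (z : E))).comp
        ((ContinuousLinearMap.id ℝ E).prod (ContinuousLinearMap.id ℝ E)))) z := by
    have hin : HasFDerivAt (fun z : E => (⟪z, z⟫ : ℝ))
        ((fderivInnerCLM ℝ ((z : E), (z : E))).comp
          ((ContinuousLinearMap.id ℝ E).prod (ContinuousLinearMap.id ℝ E))) z := by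
      simpa using (hasFDerivAt_id z).inner ℝ (hasFDerivAt_id z)
    have hfun : (fun z : E => μ / 2 * ‖z‖ ^ 2) = fun z : E => μ / 2 * (⟪z, z⟫ : ℝ) := by
      funext w; rw [real_inner_self_eq_norm_sq]
    rw [hfun]
    exact hin.const_mul (μ / 2)
  have hf' : HasFDerivAt f (InnerProductSpace.toDual ℝ E (gradient f z)) z := by
    have := (hd z).hasFDerivAt
    rwa [show InnerProductSpace.toDual ℝ E (gradient f z) = fderiv ℝ f z from
      (InnerProductSpace.toDual ℝ E).apply_symm_apply _]
  have hsub := hf'.sub hsq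
  rw [hasGradientAt_iff_hasFDerivAt]
  refine hsub.congr_fderiv ?_
  apply ContinuousLinearMap.ext
  intro y
  simp [InnerProductSpace.toDual_apply_apply, inner_sub_left, real_inner_smul_left,
    fderivInnerCLM_apply, real_inner_comm z y]
  ring

lemma interp_aux8 {μ L : ℝ} {f : E → ℝ} (hμL : μ < L)
    (hd : Differentiable ℝ f)
    (hconv : ConvexOn ℝ Set.univ (fun x : E => f x - μ / 2 * ‖x‖ ^ 2))
    (hlip : ∀ a b : E, ‖gradient f a - gradient f b‖ ≤ L * ‖a - b‖)
    (a b : E) :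
    ⟪gradient f a - gradient f b - μ • (a - b), gradient f a - gradient f b - μ • (a - b)⟫
      ≤ 2 * (L - μ) * (f a - f b - ⟪gradient f b, a - b⟫ - μ / 2 * ⟪a - b, a - b⟫) := by
  have hC : (0:ℝ) < L - μ := by linarith
  set ga := gradient f a with hga
  set gb := gradient f b with hgb
  set D : E := ga - gb - μ • (a - b) with hD
  have master : ∀ c : ℝ,
      0 ≤ (f a - f b - ⟪gb, a - b⟫ - μ / 2 * ⟪a - b, a - b⟫)
          - c * ⟪D, D⟫ + c ^ 2 * ((L - μ) / 2) * ⟪D, D⟫ := by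
    intro c
    have F1 := convex_first_order_aux8 hconv (hasGradientAt_shift_aux8 hd) (a - c • D) b
    have F2 := descent_lemma_aux8 hd hlip (a - c • D) a
    simp only [← real_inner_self_eq_norm_sq, ← hga, ← hgb] at F1 F2
    simp only [hD, inner_sub_left, inner_sub_right, inner_add_left, inner_add_right,
      real_inner_smul_left, real_inner_smul_right, inner_neg_left, inner_neg_right,
      real_inner_comm a b, real_inner_comm a ga, real_inner_comm a gb,
      real_inner_comm b ga, real_inner_comm b gb, real_inner_comm ga gb] at F1 F2 ⊢
    nlinarith [F1, F2]
  have h := master (L - μ)⁻¹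
  have hne : L - μ ≠ 0 := ne_of_gt hC
  have e1 : (L - μ) * (L - μ)⁻¹ = 1 := mul_inv_cancel₀ hne
  have e1t : ((L - μ) * (L - μ)⁻¹) * (⟪D, D⟫ : ℝ) = ⟪D, D⟫ := by rw [e1, one_mul]
  have e2t : ((L - μ) * (L - μ)⁻¹) ^ 2 * (⟪D, D⟫ : ℝ) = ⟪D, D⟫ := by rw [e1]; ring
  have h2 := mul_le_mul_of_nonneg_left h (by positivity : (0:ℝ) ≤ 2 * (L - μ))
  linarith [h2, e1t, e2t]

end aux

set_option maxHeartbeats 2000000 in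
theorem stmt8 {n : ℕ} (μ L : ℝ) (hμ : 0 < μ) (hμL : μ < L)
    (f : EuclideanSpace ℝ (Fin n) → ℝ) (hf : SmoothStronglyConvex μ L f)
    (xstar : EuclideanSpace ℝ (Fin n)) (hmin : ∀ y, f xstar ≤ f y)
    (x : ℕ → EuclideanSpace ℝ (Fin n))
    (hiter : ∀ i : ℕ, x (i + 1) = x i - (2 / (μ + L)) • gradient f (x i)) :
    ∀ i : ℕ, f (x (i + 1)) - f xstar ≤ ((L - μ) / (L + μ)) ^ 2 * (f (x i) - f xstar) := by
  obtain ⟨hsmooth, hconv, hlip⟩ := hf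
  have hd : Differentiable ℝ f := hsmooth.differentiable one_ne_zero
  have hC : (0:ℝ) < L - μ := by linarith
  have hN : (0:ℝ) < μ + L := by linarith
  have hNne : μ + L ≠ 0 := ne_of_gt hN
  -- gradient at minimizer is zero
  have hgs : gradient f xstar = 0 := by
    have hloc : IsLocalMin f xstar := Filter.Eventually.of_forall hmin
    have := hloc.hasFDerivAt_eq_zero (hd xstar).hasFDerivAt
    show (InnerProductSpace.toDual ℝ _).symm (fderiv ℝ f xstar) = 0
    rw [this, map_zero]
  intro i
  set p := x i with hp
  set q := x (i + 1) with hq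
  set s := xstar with hs
  set g1 := gradient f q with hg1
  -- express gradient f p in terms of p - q
  have hg0 : gradient f p = ((μ + L) / 2) • (p - q) := by
    have h1 : p - q = (2 / (μ + L)) • gradient f p := by
      rw [hq, hiter i]; abel
    rw [h1, smul_smul]
    rw [show (μ + L) / 2 * (2 / (μ + L)) = 1 from by field_simp]
    rw [one_smul]
  -- three interpolation inequalities
  have h1 := interp_aux8 hμL hd hconv hlip s q
  have h2 := interp_aux8 hμL hd hconv hlip p q
  have h3 := interp_aux8 hμL hd hconv hlip s p
  rw [hgs] at h1 h3
  rw [hg0] at h2 h3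
  rw [← hg1] at h1 h2
  -- residual vector
  have hw : (0:ℝ) ≤ ⟪(μ * L) • (p - s) - ((μ + L) ^ 2 / 4) • (p - q) - ((μ + L) / 2) • g1,
      (μ * L) • (p - s) - ((μ + L) ^ 2 / 4) • (p - q) - ((μ + L) / 2) • g1⟫ :=
    real_inner_self_nonneg
  simp only [inner_sub_left, inner_sub_right, inner_add_left, inner_add_right,
    real_inner_smul_left, real_inner_smul_right, inner_neg_left, inner_neg_right,
    inner_zero_left, inner_zero_right, zero_sub, sub_zero,
    real_inner_comm p q, real_inner_comm p s, real_inner_comm p g1,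
    real_inner_comm q s, real_inner_comm q g1, real_inner_comm s g1] at h1 h2 h3 hw
  -- scaled inequalities
  have m1 := mul_le_mul_of_nonneg_left h1 (by positivity : (0:ℝ) ≤ 2 * μ * (μ + L))
  have m2 := mul_le_mul_of_nonneg_left h2 (by positivity : (0:ℝ) ≤ (L - μ) * (μ + L))
  have m3 := mul_le_mul_of_nonneg_left h3 (by positivity : (0:ℝ) ≤ 2 * μ * (L - μ))
  have goal2 : (0:ℝ) ≤ 2 * (L - μ) *
      ((L - μ) ^ 2 * (f p - f s) - (L + μ) ^ 2 * (f q - f s)) := by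
    linarith [m1, m2, m3, hw]
  have goal3 : (0:ℝ) ≤ (L - μ) ^ 2 * (f p - f s) - (L + μ) ^ 2 * (f q - f s) := by
    nlinarith [goal2, hC]
  have hN2 : (0:ℝ) < (L + μ) ^ 2 := pow_pos (by linarith : (0:ℝ) < L + μ) 2
  rw [div_pow, div_mul_eq_mul_div, le_div_iff₀ hN2]
  linarith [goal3]
end
end

section
/- Let f ∈ F_{μ,L}(ℝ^n) with 0 < μ < L, x* a global minimizer, f* = f(x*), and 0 ≤ ε < 1. Suppose x₁ = x₀ - γd₀ where d₀ satisfies ‖-∇f(x₀) - d₀‖ ≤ ε‖∇f(x₀)‖ and γ minimizes γ ↦ f(x₀ - γd₀) over ℝ. Then f(x₁) - f* ≤ ((1-κ_ε)/(1+κ_ε))²(f(x₀) - f*), where κ_ε = (μ/L)·(1-ε)/(1+ε). -/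
set_option maxHeartbeats 2000000

local notation "⟪" x ", " y "⟫" => @inner ℝ _ _ x y

section Aux

variable {n : ℕ} {f : EuclideanSpace ℝ (Fin n) → ℝ} {μ L : ℝ}

private lemma lineDerivAux (hfd : Differentiable ℝ f)
    (x v : EuclideanSpace ℝ (Fin n)) (t : ℝ) :
    HasDerivAt (fun s : ℝ => f (x + s • v)) ⟪gradient f (x + t • v), v⟫ t := by
  have h1 : HasDerivAt (fun s : ℝ => x + s • v) v t := by
    simpa using ((hasDerivAt_id t).smul_const v).const_add x
  have h2 := ((hfd (x + t • v)).hasGradientAt).hasFDerivAt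
  have h3 := h2.comp_hasDerivAt t h1
  simpa [InnerProductSpace.toDual_apply_apply, Function.comp_def] using h3

private lemma descentAux (hfd : Differentiable ℝ f)
    (hLip : ∀ x y, ‖gradient f x - gradient f y‖ ≤ L * ‖x - y‖)
    (x y : EuclideanSpace ℝ (Fin n)) :
    f y ≤ f x + ⟪gradient f x, y - x⟫ + L / 2 * ‖y - x‖ ^ 2 := by
  set v := y - x with hv
  set ψ : ℝ → ℝ := fun t => f (x + t • v) - t * ⟪gradient f x, v⟫ - L * ‖v‖ ^ 2 * t ^ 2 / 2 with hψ
  have hder : ∀ t : ℝ, HasDerivAt ψ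
      (⟪gradient f (x + t • v), v⟫ - ⟪gradient f x, v⟫ - L * ‖v‖ ^ 2 * t) t := by
    intro t
    have h1 := lineDerivAux hfd x v t
    have h2 : HasDerivAt (fun t : ℝ => t * ⟪gradient f x, v⟫) ⟪gradient f x, v⟫ t := by
      simpa using (hasDerivAt_id t).mul_const ⟪gradient f x, v⟫
    have h3 : HasDerivAt (fun t : ℝ => L * ‖v‖ ^ 2 * t ^ 2 / 2) (L * ‖v‖ ^ 2 * t) t := by
      have := ((hasDerivAt_pow 2 t).const_mul (L * ‖v‖ ^ 2)).div_const 2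
      simpa using this.congr_deriv (by ring)
    exact (h1.sub h2).sub h3
  have hanti : AntitoneOn ψ (Set.Icc 0 1) := by
    apply antitoneOn_of_deriv_nonpos (convex_Icc 0 1)
    · have : Differentiable ℝ ψ := fun t => (hder t).differentiableAt
      exact this.continuous.continuousOn
    · intro t ht
      exact (hder t).differentiableAt.differentiableWithinAt
    · intro t ht
      rw [(hder t).deriv]
      rw [interior_Icc] at ht
      have h4 : ⟪gradient f (x + t • v) - gradient f x, v⟫ ≤ L * t * ‖v‖ ^ 2 := by
        calc ⟪gradient f (x + t • v) - gradient f x, v⟫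
            ≤ ‖gradient f (x + t • v) - gradient f x‖ * ‖v‖ := real_inner_le_norm _ _
          _ ≤ (L * ‖(x + t • v) - x‖) * ‖v‖ := by
              have := hLip (x + t • v) x
              nlinarith [norm_nonneg v]
          _ = L * t * ‖v‖ ^ 2 := by
              rw [add_sub_cancel_left, norm_smul, Real.norm_eq_abs, abs_of_pos ht.1]; ring
      rw [inner_sub_left] at h4
      linarith
  have h01 := hanti (Set.mem_Icc.2 ⟨le_refl 0, zero_le_one⟩)
    (Set.mem_Icc.2 ⟨zero_le_one, le_refl 1⟩) zero_le_one
  have e0 : ψ 0 = f x := by simp [hψ]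
  have e1 : ψ 1 = f y - ⟪gradient f x, v⟫ - L * ‖v‖ ^ 2 / 2 := by
    simp [hψ, hv]
  rw [e0, e1] at h01
  linarith

private lemma lowerAux (hfd : Differentiable ℝ f)
    (hconv : ConvexOn ℝ Set.univ (fun x => f x - μ / 2 * ‖x‖ ^ 2))
    (x y : EuclideanSpace ℝ (Fin n)) :
    f x + ⟪gradient f x, y - x⟫ + μ / 2 * ‖y - x‖ ^ 2 ≤ f y := by
  set v := y - x with hv
  set φ : ℝ → ℝ := fun t => f (x + t • v) - μ / 2 * (‖x‖ ^ 2 + 2 * t * ⟪x, v⟫ + t ^ 2 * ‖v‖ ^ 2)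
    with hφ
  have hφeq : ∀ t : ℝ, φ t = f (x + t • v) - μ / 2 * ‖x + t • v‖ ^ 2 := by
    intro t
    have : ‖x + t • v‖ ^ 2 = ‖x‖ ^ 2 + 2 * ⟪x, t • v⟫ + ‖t • v‖ ^ 2 := norm_add_sq_real x (t • v)
    rw [hφ]
    simp only [this, real_inner_smul_right, norm_smul, Real.norm_eq_abs, mul_pow, sq_abs]
    ring
  have hconvφ : ConvexOn ℝ Set.univ φ := by
    have hc := hconv.comp_affineMap (AffineMap.lineMap x y : ℝ →ᵃ[ℝ] EuclideanSpace ℝ (Fin n))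
    have : Set.univ = (AffineMap.lineMap x y : ℝ →ᵃ[ℝ] EuclideanSpace ℝ (Fin n)) ⁻¹' Set.univ :=
      (Set.preimage_univ).symm
    rw [this]
    refine hc.congr ?_
    intro t _
    simp only [Function.comp_apply, AffineMap.lineMap_apply_module]
    rw [hφeq t, show x + t • v = (1 - t) • x + t • y from by rw [hv]; module]
  have hder : HasDerivAt φ (⟪gradient f x, v⟫ - μ * ⟪x, v⟫) 0 := by
    have h1 := lineDerivAux hfd x v 0
    rw [show x + (0:ℝ) • v = x by simp] at h1
    have h2 : HasDerivAt (fun t : ℝ => μ / 2 * (‖x‖ ^ 2 + 2 * t * ⟪x, v⟫ + t ^ 2 * ‖v‖ ^ 2))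
        (μ * ⟪x, v⟫) 0 := by
      have h3 : HasDerivAt (fun t : ℝ => ‖x‖ ^ 2 + 2 * t * ⟪x, v⟫ + t ^ 2 * ‖v‖ ^ 2)
          (2 * ⟪x, v⟫ + 0) 0 := by
        have ha : HasDerivAt (fun t : ℝ => 2 * t * ⟪x, v⟫) (2 * ⟪x, v⟫) 0 := by
          simpa using ((hasDerivAt_id (0:ℝ)).const_mul 2).mul_const ⟪x, v⟫
        have hb : HasDerivAt (fun t : ℝ => t ^ 2 * ‖v‖ ^ 2) 0 0 := by
          simpa using (hasDerivAt_pow 2 (0:ℝ)).mul_const (‖v‖ ^ 2)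
        exact (ha.const_add (‖x‖ ^ 2)).add hb
      have h2' := h3.const_mul (μ / 2)
      have he : μ / 2 * (2 * ⟪x, v⟫ + 0) = μ * ⟪x, v⟫ := by ring
      rw [← he]; exact h2'
    exact h1.sub h2
  have hslope := hconvφ.le_slope_of_hasDerivAt (Set.mem_univ (0:ℝ)) (Set.mem_univ (1:ℝ))
    zero_lt_one hder
  rw [slope_def_field] at hslope
  have e0 : φ 0 = f x - μ / 2 * ‖x‖ ^ 2 := by simp [hφ]
  have e1 : φ 1 = f y - μ / 2 * (‖x‖ ^ 2 + 2 * ⟪x, v⟫ + ‖v‖ ^ 2) := by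
    simp [hφ, hv]
  have hxy : ‖y - x‖ ^ 2 = ‖v‖ ^ 2 := by rw [hv]
  simp only [e0, e1] at hslope
  have : (f y - μ / 2 * (‖x‖ ^ 2 + 2 * ⟪x, v⟫ + ‖v‖ ^ 2) - (f x - μ / 2 * ‖x‖ ^ 2)) / (1 - 0)
      = f y - f x - μ * ⟪x, v⟫ - μ / 2 * ‖v‖ ^ 2 := by ring
  rw [this] at hslope
  rw [hxy]
  linarith

private theorem interpAux
    (hμL : μ < L)
    (descent : ∀ x y, f y ≤ f x + ⟪gradient f x, y - x⟫ + L / 2 * ‖y - x‖ ^ 2)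
    (lower : ∀ x y, f x + ⟪gradient f x, y - x⟫ + μ / 2 * ‖y - x‖ ^ 2 ≤ f y)
    (a b : EuclideanSpace ℝ (Fin n)) :
    ‖gradient f b - gradient f a - μ • (b - a)‖ ^ 2 ≤
      (L - μ) * (2 * (f b - f a) - 2 * ⟪gradient f a, b - a⟫ - μ * ‖b - a‖ ^ 2) := by
  set ga := gradient f a with hga
  set gb := gradient f b with hgb
  set s := ga - gb - μ • (a - b) with hs
  set c := (L - μ)⁻¹ with hc
  have hLμ : (0:ℝ) < L - μ := by linarith
  have hcpos : 0 < c := inv_pos.2 hLμ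
  set z := b + c • s with hz
  have hB := lower a z
  have hA := descent b z
  have hchain : f a + ⟪ga, z - a⟫ + μ / 2 * ‖z - a‖ ^ 2 ≤
      f b + ⟪gb, z - b⟫ + L / 2 * ‖z - b‖ ^ 2 := le_trans hB hA
  have hz1 : z - a = (b - a) + c • s := by rw [hz]; abel
  have hz2 : z - b = c • s := by rw [hz]; abel
  have eq1 : ⟪ga, z - a⟫ = ⟪ga, b - a⟫ + c * ⟪ga, s⟫ := by
    rw [hz1, inner_add_right, real_inner_smul_right]
  have eq2 : ‖z - a‖ ^ 2 = ‖b - a‖ ^ 2 + 2 * (c * ⟪b - a, s⟫) + c ^ 2 * ‖s‖ ^ 2 := by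
    rw [hz1, norm_add_sq_real, real_inner_smul_right, norm_smul, Real.norm_eq_abs, mul_pow,
      sq_abs]
  have eq3 : ⟪gb, z - b⟫ = c * ⟪gb, s⟫ := by rw [hz2, real_inner_smul_right]
  have eq4 : ‖z - b‖ ^ 2 = c ^ 2 * ‖s‖ ^ 2 := by
    rw [hz2, norm_smul, Real.norm_eq_abs, mul_pow, sq_abs]
  rw [eq1, eq2, eq3, eq4] at hchain
  have hrel : ‖s‖ ^ 2 = ⟪ga, s⟫ - ⟪gb, s⟫ + μ * ⟪b - a, s⟫ := by
    have h1 : ⟪s, s⟫ = ‖s‖ ^ 2 := real_inner_self_eq_norm_sq s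
    have h2 : ⟪s, s⟫ = ⟪ga, s⟫ - ⟪gb, s⟫ - μ * ⟪a - b, s⟫ := by
      nth_rewrite 1 [hs]
      rw [inner_sub_left, inner_sub_left, real_inner_smul_left]
    have h3 : ⟪a - b, s⟫ = - ⟪b - a, s⟫ := by
      rw [show a - b = -(b - a) by abel, inner_neg_left]
    rw [h3] at h2
    rw [← h1, h2]; ring
  have hnorm : gb - ga - μ • (b - a) = -s := by rw [hs]; module
  rw [hnorm, norm_neg]
  have hne : L - μ ≠ 0 := ne_of_gt hLμ
  have h9 : c * ⟪ga, s⟫ - c * ⟪gb, s⟫ + μ * (c * ⟪b - a, s⟫) = c * ‖s‖ ^ 2 := by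
    rw [hrel]; ring
  have h6 : c * ‖s‖ ^ 2 + μ / 2 * (c ^ 2 * ‖s‖ ^ 2) - L / 2 * (c ^ 2 * ‖s‖ ^ 2)
      = ‖s‖ ^ 2 / (2 * (L - μ)) := by
    rw [hc]
    generalize ‖s‖ ^ 2 = S
    field_simp
    ring
  have hprev : ‖s‖ ^ 2 / (2 * (L - μ)) ≤ f b - f a - ⟪ga, b - a⟫ - μ / 2 * ‖b - a‖ ^ 2 := by
    linarith [h6, hchain, h9]
  have h7 := mul_le_mul_of_nonneg_left hprev (by linarith : (0:ℝ) ≤ 2 * (L - μ))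
  have h8 : 2 * (L - μ) * (‖s‖ ^ 2 / (2 * (L - μ))) = ‖s‖ ^ 2 := by
    generalize ‖s‖ ^ 2 = S
    field_simp
  linarith [h7, h8]

private theorem coreAux (μ L ε N D a b F0 F1 i00 i01 i11 i0p i0q i1p i1q ipp ipq iqq : ℝ)
    (hμ : 0 < μ) (hμL : μ < L) (hε0 : 0 ≤ ε) (hε1 : ε < 1)
    (hN : N = L * (1 + ε) - μ * (1 - ε)) (hD : D = L * (1 + ε) + μ * (1 - ε))
    (ha : i00 = a ^ 2) (hb : i11 = b ^ 2)
    (horth : i1q = i1p) (hnoise : i01 ≤ ε * (a * b))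
    (hJ1 : 0 ≤ (L - μ) * (-2 * F0 + 2 * i0p - μ * ipp) - (i00 - 2 * μ * i0p + μ ^ 2 * ipp))
    (hJ2 : 0 ≤ (L - μ) * (-2 * F1 + 2 * i1q - μ * iqq) - (i11 - 2 * μ * i1q + μ ^ 2 * iqq))
    (hJ3 : 0 ≤ (L - μ) * (2 * (F0 - F1) - 2 * (i1p - i1q) - μ * (ipp - 2 * ipq + iqq)) -
      (i00 - 2 * i01 + i11 + μ ^ 2 * (ipp - 2 * ipq + iqq) - 2 * μ * (i0p - i0q) +
        2 * μ * (i1p - i1q)))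
    (hW1 : 0 ≤ D ^ 2 * L ^ 2 * iqq + N ^ 2 * L ^ 2 * ipp + D ^ 2 * i11 + N ^ 2 * i00 -
      2 * D * N * L ^ 2 * ipq - 2 * D ^ 2 * L * i1q + 2 * D * N * L * i0q +
      2 * N * D * L * i1p - 2 * N ^ 2 * L * i0p - 2 * D * N * i01)
    (hW2 : 0 ≤ 4 * μ ^ 2 * L ^ 2 * N ^ 2 * ipp + (L - μ) ^ 2 * D ^ 2 * i11 +
      (L + μ) ^ 2 * N ^ 2 * i00 - 4 * μ * L * N * (L - μ) * D * i1p -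
      4 * μ * L * (L + μ) * N ^ 2 * i0p + 2 * (L - μ) * (L + μ) * N * D * i01) :
    D ^ 2 * F1 ≤ N ^ 2 * F0 := by
  subst horth hN hD
  have hL : 0 < L := lt_trans hμ hμL
  have hN0 : 0 < L * (1 + ε) - μ * (1 - ε) := by nlinarith
  have hD0 : 0 < L * (1 + ε) + μ * (1 - ε) := by nlinarith
  have hDN : 0 < (L * (1 + ε) + μ * (1 - ε)) - (L * (1 + ε) - μ * (1 - ε)) := by nlinarith
  have hLμ : 0 < L - μ := by linarith
  set N := L * (1 + ε) - μ * (1 - ε) with hN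
  set D := L * (1 + ε) + μ * (1 - ε) with hD
  have E1 : 0 ≤ 2 * μ * L * N ^ 2 * (D - N) *
      ((L - μ) * (-2 * F0 + 2 * i0p - μ * ipp) - (i00 - 2 * μ * i0p + μ ^ 2 * ipp)) :=
    mul_nonneg (by positivity) hJ1
  have E2 : 0 ≤ 2 * μ * L * N * D * (D - N) *
      ((L - μ) * (-2 * F1 + 2 * i1q - μ * iqq) - (i11 - 2 * μ * i1q + μ ^ 2 * iqq)) :=
    mul_nonneg (by positivity) hJ2
  have E3 : 0 ≤ 2 * μ * L * N ^ 2 * D *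
      ((L - μ) * (2 * (F0 - F1) - 2 * (i1q - i1q) - μ * (ipp - 2 * ipq + iqq)) -
      (i00 - 2 * i01 + i11 + μ ^ 2 * (ipp - 2 * ipq + iqq) - 2 * μ * (i0p - i0q) +
        2 * μ * (i1q - i1q))) :=
    mul_nonneg (by positivity) hJ3
  have E5 : 0 ≤ 8 * μ * L * N * D * (L - μ) * (ε * (a * b) - i01) :=
    mul_nonneg (by positivity) (by linarith)
  have E6 : 0 ≤ 4 * μ * L * (L - μ) * ε * (N * a - D * b) ^ 2 :=
    mul_nonneg (by positivity) (sq_nonneg _)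
  have E7 : 0 ≤ 2 * μ ^ 2 * N *
      (D ^ 2 * L ^ 2 * iqq + N ^ 2 * L ^ 2 * ipp + D ^ 2 * i11 + N ^ 2 * i00 -
      2 * D * N * L ^ 2 * ipq - 2 * D ^ 2 * L * i1q + 2 * D * N * L * i0q +
      2 * N * D * L * i1q - 2 * N ^ 2 * L * i0p - 2 * D * N * i01) :=
    mul_nonneg (by positivity) hW1
  have E8 : 0 ≤ (D - N) *
      (4 * μ ^ 2 * L ^ 2 * N ^ 2 * ipp + (L - μ) ^ 2 * D ^ 2 * i11 +
      (L + μ) ^ 2 * N ^ 2 * i00 - 4 * μ * L * N * (L - μ) * D * i1q -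
      4 * μ * L * (L + μ) * N ^ 2 * i0p + 2 * (L - μ) * (L + μ) * N * D * i01) :=
    mul_nonneg (by linarith) hW2
  have key : 0 ≤ 4 * μ * L * N * (L - μ) * (N ^ 2 * F0 - D ^ 2 * F1) := by
    have hc : 4 * μ * L * N * (L - μ) * (N ^ 2 * F0 - D ^ 2 * F1) =
        2 * μ * L * N ^ 2 * (D - N) *
          ((L - μ) * (-2 * F0 + 2 * i0p - μ * ipp) - (i00 - 2 * μ * i0p + μ ^ 2 * ipp)) +
        2 * μ * L * N * D * (D - N) *
          ((L - μ) * (-2 * F1 + 2 * i1q - μ * iqq) - (i11 - 2 * μ * i1q + μ ^ 2 * iqq)) +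
        2 * μ * L * N ^ 2 * D *
          ((L - μ) * (2 * (F0 - F1) - 2 * (i1q - i1q) - μ * (ipp - 2 * ipq + iqq)) -
          (i00 - 2 * i01 + i11 + μ ^ 2 * (ipp - 2 * ipq + iqq) - 2 * μ * (i0p - i0q) +
            2 * μ * (i1q - i1q))) +
        8 * μ * L * N * D * (L - μ) * (ε * (a * b) - i01) +
        4 * μ * L * (L - μ) * ε * (N * a - D * b) ^ 2 +
        2 * μ ^ 2 * N *
          (D ^ 2 * L ^ 2 * iqq + N ^ 2 * L ^ 2 * ipp + D ^ 2 * i11 + N ^ 2 * i00 -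
          2 * D * N * L ^ 2 * ipq - 2 * D ^ 2 * L * i1q + 2 * D * N * L * i0q +
          2 * N * D * L * i1q - 2 * N ^ 2 * L * i0p - 2 * D * N * i01) +
        (D - N) *
          (4 * μ ^ 2 * L ^ 2 * N ^ 2 * ipp + (L - μ) ^ 2 * D ^ 2 * i11 +
          (L + μ) ^ 2 * N ^ 2 * i00 - 4 * μ * L * N * (L - μ) * D * i1q -
          4 * μ * L * (L + μ) * N ^ 2 * i0p + 2 * (L - μ) * (L + μ) * N * D * i01) := by
      rw [hN, hD, ha, hb]; ring
    rw [hc]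
    linarith [E1, E2, E3, E5, E6, E7, E8]
  nlinarith [key, mul_pos (mul_pos (mul_pos (mul_pos (by linarith : (0:ℝ) < 4 * μ) hL) hN0)
    hLμ) hμ]

end Aux

theorem stmt10 {n : ℕ} (μ L ε : ℝ) (hμ : 0 < μ) (hμL : μ < L) (hε0 : 0 ≤ ε) (hε1 : ε < 1)
    (f : EuclideanSpace ℝ (Fin n) → ℝ) (hf : SmoothStronglyConvex μ L f)
    (xstar : EuclideanSpace ℝ (Fin n)) (hmin : ∀ y, f xstar ≤ f y)
    (x₀ x₁ d₀ : EuclideanSpace ℝ (Fin n)) (γ : ℝ)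
    (hd₀ : ‖-gradient f x₀ - d₀‖ ≤ ε * ‖gradient f x₀‖)
    (hγ : ∀ γ' : ℝ, f (x₀ - γ • d₀) ≤ f (x₀ - γ' • d₀))
    (hx₁ : x₁ = x₀ - γ • d₀) :
    f x₁ - f xstar ≤
      ((1 - μ / L * ((1 - ε) / (1 + ε))) / (1 + μ / L * ((1 - ε) / (1 + ε)))) ^ 2 *
        (f x₀ - f xstar) := by
  obtain ⟨hc1, hconv, hLip⟩ := hf
  have hfd : Differentiable ℝ f := hc1.differentiable one_ne_zero
  have hL : 0 < L := lt_trans hμ hμL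
  have hLμ : (0:ℝ) < L - μ := by linarith
  have h1ε : (0:ℝ) < 1 + ε := by linarith
  set g₀ := gradient f x₀ with hg₀
  set g₁ := gradient f x₁ with hg₁
  -- gradient at the minimizer is zero
  have hgs : gradient f xstar = 0 := by
    have hl : IsLocalMin f xstar := Filter.Eventually.of_forall hmin
    have hfz : fderiv ℝ f xstar = 0 := hl.fderiv_eq_zero
    have h0 : HasFDerivAt f
        (InnerProductSpace.toDual ℝ (EuclideanSpace ℝ (Fin n)) (0 : EuclideanSpace ℝ (Fin n)))
        xstar := by
      rw [map_zero, ← hfz]; exact (hfd xstar).hasFDerivAt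
    exact (hasGradientAt_iff_hasFDerivAt.mpr h0).gradient
  -- exact line search orthogonality
  have horthd : ⟪g₁, d₀⟫ = 0 := by
    have hψ : ∀ t : ℝ, f (x₀ + γ • (-d₀)) ≤ f (x₀ + t • (-d₀)) := by
      intro t
      simpa only [smul_neg, ← sub_eq_add_neg] using hγ t
    have hloc : IsLocalMin (fun t : ℝ => f (x₀ + t • (-d₀))) γ :=
      Filter.Eventually.of_forall hψ
    have hder := lineDerivAux hfd x₀ (-d₀) γ
    have h0 := hloc.hasDerivAt_eq_zero hder
    have hx : x₀ + γ • (-d₀) = x₁ := by rw [hx₁]; module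
    rw [hx] at h0
    have : -⟪g₁, d₀⟫ = 0 := by rw [← inner_neg_right]; exact h0
    linarith
  -- noise condition
  have hnoise : ⟪g₀, g₁⟫ ≤ ε * (‖g₀‖ * ‖g₁‖) := by
    have h1 : ⟪g₀, g₁⟫ = ⟪g₀ + d₀, g₁⟫ := by
      rw [inner_add_left]
      have hd : ⟪d₀, g₁⟫ = 0 := by rw [real_inner_comm]; exact horthd
      rw [hd, add_zero]
    have h2 : ⟪g₀ + d₀, g₁⟫ ≤ ‖g₀ + d₀‖ * ‖g₁‖ := real_inner_le_norm _ _
    have h3 : ‖g₀ + d₀‖ ≤ ε * ‖g₀‖ := by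
      have he : -g₀ - d₀ = -(g₀ + d₀) := by module
      rw [he, norm_neg] at hd₀
      exact hd₀
    have h4 := mul_le_mul_of_nonneg_right h3 (norm_nonneg g₁)
    rw [h1]
    calc ⟪g₀ + d₀, g₁⟫ ≤ ‖g₀ + d₀‖ * ‖g₁‖ := h2
      _ ≤ ε * ‖g₀‖ * ‖g₁‖ := h4
      _ = ε * (‖g₀‖ * ‖g₁‖) := by ring
  set p := x₀ - xstar with hp
  set q := x₁ - xstar with hq
  have hsorth : ⟪g₁, q⟫ = ⟪g₁, p⟫ := by
    have hqp : q - p = -(γ • d₀) := by rw [hq, hp, hx₁]; abel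
    have h5 : ⟪g₁, q⟫ - ⟪g₁, p⟫ = 0 := by
      rw [← inner_sub_right, hqp, inner_neg_right, real_inner_smul_right, horthd]; ring
    linarith
  have hdes := descentAux hfd hLip
  have hlow := lowerAux hfd hconv
  have hJ1v := interpAux hμL hdes hlow x₀ xstar
  have hJ2v := interpAux hμL hdes hlow x₁ xstar
  have hJ3v := interpAux hμL hdes hlow x₁ x₀
  rw [hgs] at hJ1v hJ2v
  rw [show xstar - x₀ = -p from by rw [hp]; abel] at hJ1v
  rw [show xstar - x₁ = -q from by rw [hq]; abel] at hJ2v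
  rw [show x₀ - x₁ = p - q from by rw [hp, hq]; abel] at hJ3v
  -- scalarized interpolation inequalities
  have hJ1s : 0 ≤ (L - μ) * (-2 * (f x₀ - f xstar) + 2 * ⟪g₀, p⟫ - μ * ‖p‖ ^ 2) -
      (‖g₀‖ ^ 2 - 2 * μ * ⟪g₀, p⟫ + μ ^ 2 * ‖p‖ ^ 2) := by
    have eA : ‖(0:EuclideanSpace ℝ (Fin n)) - g₀ - μ • (-p)‖ ^ 2
        = ‖g₀‖ ^ 2 - 2 * μ * ⟪g₀, p⟫ + μ ^ 2 * ‖p‖ ^ 2 := by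
      simp only [← real_inner_self_eq_norm_sq, inner_sub_left, inner_sub_right,
        inner_neg_left, inner_neg_right, inner_zero_left, inner_zero_right,
        real_inner_smul_left, real_inner_smul_right, real_inner_comm p g₀]
      ring
    have eB : ⟪g₀, -p⟫ = -⟪g₀, p⟫ := inner_neg_right g₀ p
    have eC : ‖-p‖ ^ 2 = ‖p‖ ^ 2 := by rw [norm_neg]
    rw [eA, eB, eC] at hJ1v
    linarith [hJ1v]
  have hJ2s : 0 ≤ (L - μ) * (-2 * (f x₁ - f xstar) + 2 * ⟪g₁, q⟫ - μ * ‖q‖ ^ 2) -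
      (‖g₁‖ ^ 2 - 2 * μ * ⟪g₁, q⟫ + μ ^ 2 * ‖q‖ ^ 2) := by
    have eA : ‖(0:EuclideanSpace ℝ (Fin n)) - g₁ - μ • (-q)‖ ^ 2
        = ‖g₁‖ ^ 2 - 2 * μ * ⟪g₁, q⟫ + μ ^ 2 * ‖q‖ ^ 2 := by
      simp only [← real_inner_self_eq_norm_sq, inner_sub_left, inner_sub_right,
        inner_neg_left, inner_neg_right, inner_zero_left, inner_zero_right,
        real_inner_smul_left, real_inner_smul_right, real_inner_comm q g₁]
      ring
    have eB : ⟪g₁, -q⟫ = -⟪g₁, q⟫ := inner_neg_right g₁ q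
    have eC : ‖-q‖ ^ 2 = ‖q‖ ^ 2 := by rw [norm_neg]
    rw [eA, eB, eC] at hJ2v
    linarith [hJ2v]
  have hJ3s : 0 ≤ (L - μ) * (2 * ((f x₀ - f xstar) - (f x₁ - f xstar)) -
      2 * (⟪g₁, p⟫ - ⟪g₁, q⟫) - μ * (‖p‖ ^ 2 - 2 * ⟪p, q⟫ + ‖q‖ ^ 2)) -
      (‖g₀‖ ^ 2 - 2 * ⟪g₀, g₁⟫ + ‖g₁‖ ^ 2 + μ ^ 2 * (‖p‖ ^ 2 - 2 * ⟪p, q⟫ + ‖q‖ ^ 2) -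
        2 * μ * (⟪g₀, p⟫ - ⟪g₀, q⟫) + 2 * μ * (⟪g₁, p⟫ - ⟪g₁, q⟫)) := by
    have eA : ‖g₀ - g₁ - μ • (p - q)‖ ^ 2
        = ‖g₀‖ ^ 2 - 2 * ⟪g₀, g₁⟫ + ‖g₁‖ ^ 2 + μ ^ 2 * (‖p‖ ^ 2 - 2 * ⟪p, q⟫ + ‖q‖ ^ 2) -
          2 * μ * (⟪g₀, p⟫ - ⟪g₀, q⟫) + 2 * μ * (⟪g₁, p⟫ - ⟪g₁, q⟫) := by
      simp only [← real_inner_self_eq_norm_sq, inner_sub_left, inner_sub_right,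
        real_inner_smul_left, real_inner_smul_right, real_inner_comm g₁ g₀,
        real_inner_comm p g₀, real_inner_comm q g₀, real_inner_comm p g₁,
        real_inner_comm q g₁, real_inner_comm q p]
      ring
    have eB : ⟪g₁, p - q⟫ = ⟪g₁, p⟫ - ⟪g₁, q⟫ := inner_sub_right g₁ p q
    have eC : ‖p - q‖ ^ 2 = ‖p‖ ^ 2 - 2 * ⟪p, q⟫ + ‖q‖ ^ 2 := by
      simp only [← real_inner_self_eq_norm_sq, inner_sub_left, inner_sub_right,
        real_inner_comm q p]
      ring
    rw [eA, eB, eC] at hJ3v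
    linarith [hJ3v]
  set Nv := L * (1 + ε) - μ * (1 - ε) with hNv
  set Dv := L * (1 + ε) + μ * (1 - ε) with hDv
  have hNpos : 0 < Nv := by rw [hNv]; nlinarith
  have hDpos : 0 < Dv := by rw [hDv]; nlinarith
  -- the two PSD certificate vectors
  have hW1s : 0 ≤ Dv ^ 2 * L ^ 2 * ‖q‖ ^ 2 + Nv ^ 2 * L ^ 2 * ‖p‖ ^ 2 + Dv ^ 2 * ‖g₁‖ ^ 2 +
      Nv ^ 2 * ‖g₀‖ ^ 2 - 2 * Dv * Nv * L ^ 2 * ⟪p, q⟫ - 2 * Dv ^ 2 * L * ⟪g₁, q⟫ +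
      2 * Dv * Nv * L * ⟪g₀, q⟫ + 2 * Nv * Dv * L * ⟪g₁, p⟫ - 2 * Nv ^ 2 * L * ⟪g₀, p⟫ -
      2 * Dv * Nv * ⟪g₀, g₁⟫ := by
    have h := sq_nonneg ‖(Dv * L) • q - (Nv * L) • p - Dv • g₁ + Nv • g₀‖
    have eW : ‖(Dv * L) • q - (Nv * L) • p - Dv • g₁ + Nv • g₀‖ ^ 2
        = Dv ^ 2 * L ^ 2 * ‖q‖ ^ 2 + Nv ^ 2 * L ^ 2 * ‖p‖ ^ 2 + Dv ^ 2 * ‖g₁‖ ^ 2 +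
      Nv ^ 2 * ‖g₀‖ ^ 2 - 2 * Dv * Nv * L ^ 2 * ⟪p, q⟫ - 2 * Dv ^ 2 * L * ⟪g₁, q⟫ +
      2 * Dv * Nv * L * ⟪g₀, q⟫ + 2 * Nv * Dv * L * ⟪g₁, p⟫ - 2 * Nv ^ 2 * L * ⟪g₀, p⟫ -
      2 * Dv * Nv * ⟪g₀, g₁⟫ := by
      simp only [← real_inner_self_eq_norm_sq, inner_sub_left, inner_sub_right,
        inner_add_left, inner_add_right, real_inner_smul_left, real_inner_smul_right,
        real_inner_comm g₁ g₀, real_inner_comm p g₀, real_inner_comm q g₀,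
        real_inner_comm p g₁, real_inner_comm q g₁, real_inner_comm q p]
      ring
    rw [eW] at h
    linarith [h]
  have hW2s : 0 ≤ 4 * μ ^ 2 * L ^ 2 * Nv ^ 2 * ‖p‖ ^ 2 + (L - μ) ^ 2 * Dv ^ 2 * ‖g₁‖ ^ 2 +
      (L + μ) ^ 2 * Nv ^ 2 * ‖g₀‖ ^ 2 - 4 * μ * L * Nv * (L - μ) * Dv * ⟪g₁, p⟫ -
      4 * μ * L * (L + μ) * Nv ^ 2 * ⟪g₀, p⟫ + 2 * (L - μ) * (L + μ) * Nv * Dv * ⟪g₀, g₁⟫ := by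
    have h := sq_nonneg ‖(2 * μ * L * Nv) • p - ((L - μ) * Dv) • g₁ - ((L + μ) * Nv) • g₀‖
    have eW : ‖(2 * μ * L * Nv) • p - ((L - μ) * Dv) • g₁ - ((L + μ) * Nv) • g₀‖ ^ 2
        = 4 * μ ^ 2 * L ^ 2 * Nv ^ 2 * ‖p‖ ^ 2 + (L - μ) ^ 2 * Dv ^ 2 * ‖g₁‖ ^ 2 +
      (L + μ) ^ 2 * Nv ^ 2 * ‖g₀‖ ^ 2 - 4 * μ * L * Nv * (L - μ) * Dv * ⟪g₁, p⟫ -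
      4 * μ * L * (L + μ) * Nv ^ 2 * ⟪g₀, p⟫ + 2 * (L - μ) * (L + μ) * Nv * Dv * ⟪g₀, g₁⟫ := by
      simp only [← real_inner_self_eq_norm_sq, inner_sub_left, inner_sub_right,
        real_inner_smul_left, real_inner_smul_right, real_inner_comm g₁ g₀,
        real_inner_comm p g₀, real_inner_comm p g₁]
      ring
    rw [eW] at h
    linarith [h]
  have hcore := coreAux μ L ε Nv Dv ‖g₀‖ ‖g₁‖ (f x₀ - f xstar) (f x₁ - f xstar)
    (‖g₀‖ ^ 2) ⟪g₀, g₁⟫ (‖g₁‖ ^ 2) ⟪g₀, p⟫ ⟪g₀, q⟫ ⟪g₁, p⟫ ⟪g₁, q⟫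
    (‖p‖ ^ 2) ⟪p, q⟫ (‖q‖ ^ 2)
    hμ hμL hε0 hε1 hNv hDv rfl rfl hsorth hnoise hJ1s hJ2s hJ3s hW1s hW2s
  have hnn : 0 ≤ μ / L * ((1 - ε) / (1 + ε)) := by
    apply mul_nonneg
    · positivity
    · apply div_nonneg <;> linarith
  have hd1 : 0 < 1 + μ / L * ((1 - ε) / (1 + ε)) := by linarith
  have hratio : (1 - μ / L * ((1 - ε) / (1 + ε))) / (1 + μ / L * ((1 - ε) / (1 + ε)))
      = Nv / Dv := by
    rw [hNv, hDv, div_eq_div_iff (ne_of_gt hd1) (by positivity)]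
    field_simp
    try ring
  rw [hratio, div_pow, div_mul_eq_mul_div, le_div_iff₀ (by positivity : (0:ℝ) < Dv ^ 2)]
  linarith [hcore]
end

section
/- Let f : ℝ^n → ℝ be differentiable, 0 ≤ ε < 1, and suppose d₀ ∈ ℝ^n satisfies ‖-∇f(x₀) - d₀‖ ≤ ε‖∇f(x₀)‖. Let x₁ = x₀ - γd₀ where γ globally minimizes γ ↦ f(x₀ - γd₀). Writing g₀ = ∇f(x₀), g₁ = ∇f(x₁), one has g₀ᵀg₁ ≤ ε‖g₀‖‖g₁‖. -/
open RealInnerProductSpace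

theorem stmt11 {n : ℕ} (f : EuclideanSpace ℝ (Fin n) → ℝ) (hf : Differentiable ℝ f)
    (ε : ℝ) (hε0 : 0 ≤ ε) (hε1 : ε < 1)
    (x₀ x₁ d₀ : EuclideanSpace ℝ (Fin n)) (γ : ℝ)
    (hd₀ : ‖-gradient f x₀ - d₀‖ ≤ ε * ‖gradient f x₀‖)
    (hγ : ∀ γ' : ℝ, f (x₀ - γ • d₀) ≤ f (x₀ - γ' • d₀))
    (hx₁ : x₁ = x₀ - γ • d₀) :
    ⟪gradient f x₀, gradient f x₁⟫ ≤ ε * ‖gradient f x₀‖ * ‖gradient f x₁‖ := by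
  set g₀ := gradient f x₀ with hg₀
  set g₁ := gradient f x₁ with hg₁
  have hc : HasDerivAt (fun t : ℝ => x₀ - t • d₀) (-d₀) γ := by
    simpa using ((hasDerivAt_id γ).smul_const d₀).const_sub x₀
  have hg : HasGradientAt f g₁ x₁ := (hf x₁).hasGradientAt
  have hφ : HasDerivAt (fun t : ℝ => f (x₀ - t • d₀)) ⟪g₁, -d₀⟫ γ := by
    have h := (hx₁ ▸ hg.hasFDerivAt).comp_hasDerivAt γ hc
    simpa [Function.comp_def] using h
  have hmin : IsLocalMin (fun t : ℝ => f (x₀ - t • d₀)) γ :=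
    Filter.Eventually.of_forall hγ
  have hzero : ⟪g₁, d₀⟫ = 0 := by
    have h0 := hmin.hasDerivAt_eq_zero hφ
    rw [inner_neg_right] at h0
    linarith
  have hsymm : ⟪d₀, g₁⟫ = 0 := by rw [real_inner_comm]; exact hzero
  have heq : ⟪g₀, g₁⟫ = ⟪g₀ + d₀, g₁⟫ := by
    rw [inner_add_left, hsymm]; ring
  have hcs : ⟪g₀ + d₀, g₁⟫ ≤ ‖g₀ + d₀‖ * ‖g₁‖ := real_inner_le_norm _ _
  have hnorm : ‖g₀ + d₀‖ = ‖-g₀ - d₀‖ := by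
    rw [← norm_neg]; congr 1; abel
  calc ⟪g₀, g₁⟫ = ⟪g₀ + d₀, g₁⟫ := heq
    _ ≤ ‖g₀ + d₀‖ * ‖g₁‖ := hcs
    _ = ‖-g₀ - d₀‖ * ‖g₁‖ := by rw [hnorm]
    _ ≤ ε * ‖g₀‖ * ‖g₁‖ := by
        apply mul_le_mul_of_nonneg_right hd₀ (norm_nonneg _)
end

section
/- Let f ∈ F_{μ,L}(ℝ^n) with 0 < μ < L and let x₀,…,x_N be the iterates of gradient descent with exact line search applied to f. Then the data (x_i, f(x_i), ∇f(x_i)) for i ∈ {*,0,…,N} (where x* is the minimizer and ∇f(x*) = 0) is a feasible solution of the SDP performance estimation problem: it satisfies ∇f(x_{i+1})ᵀ(x_{i+1}-x_i) = 0 and ∇f(x_{i+1})ᵀ∇f(x_i) = 0 for all 0 ≤ i ≤ N-1, and all the F_{μ,L}-interpolation inequalities among the points. -/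
open RealInnerProductSpace Set

variable {E : Type*} [NormedAddCommGroup E] [InnerProductSpace ℝ E] [CompleteSpace E]

/-- Derivative along a line. -/
lemma line_hasDerivAt {f : E → ℝ} {g : E} (a v : E) (t : ℝ)
    (hg : HasGradientAt f g (a + t • v)) :
    HasDerivAt (fun s : ℝ => f (a + s • v)) ⟪g, v⟫ t := by
  have hline : HasDerivAt (fun s : ℝ => a + s • v) v t := by
    simpa using ((hasDerivAt_id t).smul_const v).const_add a
  have := (hasGradientAt_iff_hasFDerivAt.1 hg).comp_hasDerivAt t hline
  simpa [InnerProductSpace.toDual_apply_apply, Function.comp_def] using this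

/-- Supporting hyperplane inequality for convex differentiable functions. -/
lemma convex_grad_ineq {φ : E → ℝ} {G : E → E}
    (hconv : ConvexOn ℝ Set.univ φ) (hd : ∀ z, HasGradientAt φ (G z) z) (x y : E) :
    φ x + ⟪G x, y - x⟫ ≤ φ y := by
  set g : ℝ → ℝ := fun t => φ (x + t • (y - x)) with hgdef
  have hgconv : ConvexOn ℝ Set.univ g := by
    have h := hconv.comp_affineMap (AffineMap.lineMap x y)
    have heq : (φ ∘ ⇑(AffineMap.lineMap x y)) = g := by
      funext t
      simp only [g, Function.comp_apply, AffineMap.lineMap_apply_module]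
      congr 1
      rw [smul_sub, sub_smul, one_smul]
      abel
    rw [heq, Set.preimage_univ] at h
    exact h
  have hderiv : HasDerivAt g ⟪G x, y - x⟫ 0 := by
    have := line_hasDerivAt (f := φ) x (y - x) 0 (by simpa using hd x)
    simpa [g] using this
  have h01 : (0:ℝ) < 1 := one_pos
  have := hgconv.le_slope_of_hasDerivAt (Set.mem_univ 0) (Set.mem_univ 1) h01 hderiv
  rw [slope_def_field] at this
  simp only [g, zero_smul, add_zero, one_smul] at this
  have hx1 : x + (y - x) = y := by abel
  rw [hx1] at this
  have : ⟪G x, y - x⟫ ≤ φ y - φ x := by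
    simpa [div_one] using this
  linarith

/-- Descent lemma from Lipschitz gradient. -/
lemma descent_lemma {f : E → ℝ} {G : E → E} {K : ℝ} (hK : 0 ≤ K)
    (hd : ∀ z, HasGradientAt f (G z) z)
    (hLip : ∀ a b, ‖G a - G b‖ ≤ K * ‖a - b‖) (x y : E) :
    f y ≤ f x + ⟪G x, y - x⟫ + K / 2 * ‖y - x‖ ^ 2 := by
  set c : ℝ := ⟪G x, y - x⟫ with hc
  set s : ℝ := ‖y - x‖ ^ 2 with hs
  set g : ℝ → ℝ := fun t => f (x + t • (y - x)) - t * c - K / 2 * s * t ^ 2 with hg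
  have hder : ∀ t : ℝ, HasDerivAt g (⟪G (x + t • (y - x)), y - x⟫ - c - K * s * t) t := by
    intro t
    have h1 : HasDerivAt (fun u : ℝ => f (x + u • (y - x))) ⟪G (x + t • (y - x)), y - x⟫ t :=
      line_hasDerivAt x (y - x) t (hd _)
    have h2 : HasDerivAt (fun u : ℝ => u * c) c t := by
      simpa using (hasDerivAt_id t).mul_const c
    have h3 : HasDerivAt (fun u : ℝ => K / 2 * s * u ^ 2) (K / 2 * s * (2 * t)) t := by
      exact (((hasDerivAt_pow 2 t)).const_mul (K / 2 * s)).congr_deriv (by ring)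
    have := (h1.sub h2).sub h3
    exact this.congr_deriv (by ring)
  have hanti : AntitoneOn g (Icc (0:ℝ) 1) := by
    apply antitoneOn_of_deriv_nonpos (convex_Icc 0 1)
    · exact fun t _ => ((hder t).differentiableAt).continuousAt.continuousWithinAt
    · exact fun t _ => ((hder t).differentiableAt).differentiableWithinAt
    · intro t ht
      rw [interior_Icc] at ht
      rw [(hder t).deriv]
      have hb : ⟪G (x + t • (y - x)) - G x, y - x⟫ ≤ K * s * t := by
        calc ⟪G (x + t • (y - x)) - G x, y - x⟫ ≤ ‖G (x + t • (y - x)) - G x‖ * ‖y - x‖ :=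
              real_inner_le_norm _ _
          _ ≤ K * ‖(x + t • (y - x)) - x‖ * ‖y - x‖ := by
              have := hLip (x + t • (y - x)) x
              simp only [add_sub_cancel_left] at this
              exact mul_le_mul_of_nonneg_right (by simpa using this) (norm_nonneg _)
          _ = K * (|t| * ‖y - x‖) * ‖y - x‖ := by
              rw [add_sub_cancel_left, norm_smul, Real.norm_eq_abs]
          _ = K * s * |t| := by rw [hs]; ring
          _ = K * s * t := by rw [abs_of_pos ht.1]
      have hexp : ⟪G (x + t • (y - x)), y - x⟫ - c = ⟪G (x + t • (y - x)) - G x, y - x⟫ := by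
        rw [inner_sub_left]
      linarith
  have h01 := hanti (Set.left_mem_Icc.2 zero_le_one) (Set.right_mem_Icc.2 zero_le_one) zero_le_one
  simp only [g, zero_smul, add_zero, one_smul, zero_mul, mul_zero, sub_zero, one_mul,
    one_pow, mul_one] at h01
  have hx1 : x + (y - x) = y := by abel
  rw [hx1] at h01
  -- h01 : f y - c - K/2*s ≤ f x - 0 - 0
  have hz : (0:ℝ) ^ 2 = 0 := by norm_num
  linarith [h01]

/-- Cocoercivity of the Bregman divergence for a convex function with a quadratic upper bound. -/
lemma breg_coco {φ : E → ℝ} {G : E → E} {K : ℝ} (hK : 0 < K)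
    (hconv : ∀ a b : E, φ a + ⟪G a, b - a⟫ ≤ φ b)
    (hdesc : ∀ a b : E, φ b ≤ φ a + ⟪G a, b - a⟫ + K / 2 * ‖b - a‖ ^ 2) (x y : E) :
    1 / (2 * K) * ‖G x - G y‖ ^ 2 ≤ φ x - φ y - ⟪G y, x - y⟫ := by
  set d : E := G x - G y with hd
  set w : E := x - (1 / K) • d with hw
  have h1 := hconv y w
  have h2 := hdesc x w
  have hwx : w - x = -((1 / K) • d) := by rw [hw]; abel
  have e1 : ⟪G x, w - x⟫ = -(1 / K * ⟪G x, d⟫) := by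
    rw [hwx, inner_neg_right, real_inner_smul_right]
  have e2 : ‖w - x‖ ^ 2 = (1 / K) ^ 2 * ‖d‖ ^ 2 := by
    rw [hwx, norm_neg, norm_smul, mul_pow, Real.norm_eq_abs, sq_abs]
  have e3 : ⟪G y, w - y⟫ = ⟪G y, x - y⟫ - 1 / K * ⟪G y, d⟫ := by
    have : w - y = (x - y) - (1 / K) • d := by rw [hw]; abel
    rw [this, inner_sub_right, real_inner_smul_right]
  have e4 : ⟪G x, d⟫ - ⟪G y, d⟫ = ‖d‖ ^ 2 := by
    rw [← inner_sub_left, ← hd, real_inner_self_eq_norm_sq]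
  rw [e3] at h1
  rw [e1, e2] at h2
  have hK' : K ≠ 0 := ne_of_gt hK
  have key : φ y + ⟪G y, x - y⟫ - 1 / K * ⟪G y, d⟫ ≤
      φ x - 1 / K * ⟪G x, d⟫ + K / 2 * ((1 / K) ^ 2 * ‖d‖ ^ 2) := by linarith
  have hfrac : K / 2 * ((1 / K) ^ 2 * ‖d‖ ^ 2) = 1 / (2 * K) * ‖d‖ ^ 2 := by
    field_simp
  rw [hfrac] at key
  have : 1 / K * (⟪G x, d⟫ - ⟪G y, d⟫) = 1 / K * ‖d‖ ^ 2 := by rw [e4]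
  have h2K : 1 / K * ‖d‖ ^ 2 - 1 / (2 * K) * ‖d‖ ^ 2 = 1 / (2 * K) * ‖d‖ ^ 2 := by
    field_simp; ring
  nlinarith [key, e4]

lemma sub_half_sq_hasGradientAt {f : E → ℝ} (μ : ℝ) (z : E) (hdiff : DifferentiableAt ℝ f z) :
    HasGradientAt (fun w => f w - μ / 2 * ‖w‖ ^ 2) (gradient f z - μ • z) z := by
  have hf' : HasFDerivAt f (InnerProductSpace.toDual ℝ E (gradient f z)) z :=
    hasGradientAt_iff_hasFDerivAt.1 hdiff.hasGradientAt
  have hn : HasFDerivAt (fun w : E => ‖w‖ ^ 2) (2 • (innerSL ℝ z)) z :=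
    (hasStrictFDerivAt_norm_sq z).hasFDerivAt
  have hn2 : HasFDerivAt (fun w : E => μ / 2 * ‖w‖ ^ 2) ((μ / 2) • (2 • (innerSL ℝ z))) z :=
    hn.const_smul (μ / 2)
  have hsub := hf'.sub hn2
  rw [hasGradientAt_iff_hasFDerivAt]
  refine hsub.congr_fderiv ?_
  ext w
  simp [inner_sub_left, real_inner_smul_left]
  ring

lemma interp_general {μ L : ℝ} (hμ : 0 < μ) (hμL : μ < L) {f : E → ℝ}
    (hf1 : ContDiff ℝ 1 f)
    (hf2 : ConvexOn ℝ Set.univ (fun x => f x - μ / 2 * ‖x‖ ^ 2))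
    (hf3 : ∀ a b : E, ‖gradient f a - gradient f b‖ ≤ L * ‖a - b‖) (xi xj : E) :
    f xi - f xj - ⟪gradient f xj, xi - xj⟫ ≥ 1 / (2 * (1 - μ / L)) *
      ((1 / L) * ‖gradient f xi - gradient f xj‖ ^ 2 + μ * ‖xi - xj‖ ^ 2 -
        (2 * μ / L) * ⟪gradient f xj - gradient f xi, xj - xi⟫) := by
  have hdiff : Differentiable ℝ f := hf1.differentiable one_ne_zero
  set G : E → E := fun z => gradient f z with hG
  have hgrad : ∀ z, HasGradientAt f (G z) z := fun z => (hdiff z).hasGradientAt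
  set h : E → ℝ := fun z => f z - μ / 2 * ‖z‖ ^ 2 with hh
  set Gh : E → E := fun z => G z - μ • z with hGh
  have hgradh : ∀ z, HasGradientAt h (Gh z) z := fun z => sub_half_sq_hasGradientAt μ z (hdiff z)
  have hL : (0:ℝ) < L := lt_trans hμ hμL
  have hKpos : (0:ℝ) < L - μ := by linarith
  -- quadratic expansion identity
  have sqid : ∀ a b : E, ‖b - a‖ ^ 2 = ‖b‖ ^ 2 - ‖a‖ ^ 2 - 2 * ⟪a, b - a⟫ := by
    intro a b
    have h1 : ‖b - a‖ ^ 2 = ‖b‖ ^ 2 - 2 * ⟪b, a⟫ + ‖a‖ ^ 2 := norm_sub_sq_real b a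
    have h2 : ⟪a, b - a⟫ = ⟪a, b⟫ - ‖a‖ ^ 2 := by
      rw [inner_sub_right, real_inner_self_eq_norm_sq]
    rw [h1, h2, real_inner_comm b a]; ring
  have hGhsub : ∀ a b : E, Gh b - Gh a = (G b - G a) - μ • (b - a) := by
    intro a b; simp only [Gh, smul_sub]; abel
  have hGhinner : ∀ a b : E, ⟪Gh a, b - a⟫ = ⟪G a, b - a⟫ - μ * ⟪a, b - a⟫ := by
    intro a b; simp only [Gh, inner_sub_left, real_inner_smul_left]
  -- descent lemma for h with constant L - μ
  have hdesc : ∀ a b : E, h b ≤ h a + ⟪Gh a, b - a⟫ + (L - μ) / 2 * ‖b - a‖ ^ 2 := by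
    intro a b
    have hdf := descent_lemma (le_of_lt hL) hgrad hf3 a b
    have hq := sqid a b
    have hi := hGhinner a b
    simp only [h]
    nlinarith [hdf, hq, hi]
  have hconvineq : ∀ a b : E, h a + ⟪Gh a, b - a⟫ ≤ h b :=
    convex_grad_ineq hf2 hgradh
  have hbreg := breg_coco hKpos hconvineq hdesc xi xj
  -- unfold everything
  set sg : ℝ := ‖G xi - G xj‖ ^ 2 with hsg
  set sx : ℝ := ‖xi - xj‖ ^ 2 with hsx
  set ip : ℝ := ⟪G xi - G xj, xi - xj⟫ with hip
  have e1 : ‖Gh xi - Gh xj‖ ^ 2 = sg - 2 * μ * ip + μ ^ 2 * sx := by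
    rw [hGhsub xj xi]
    have := norm_sub_sq_real (G xi - G xj) (μ • (xi - xj))
    rw [this, real_inner_smul_right, norm_smul, Real.norm_eq_abs]
    have : (|μ| * ‖xi - xj‖) ^ 2 = μ ^ 2 * sx := by rw [mul_pow, sq_abs, hsx]
    rw [this, hsg, hip]
    ring
  have e2 : h xi - h xj - ⟪Gh xj, xi - xj⟫ =
      f xi - f xj - ⟪G xj, xi - xj⟫ - μ / 2 * sx := by
    have hq := sqid xj xi
    have hi := hGhinner xj xi
    simp only [h]
    rw [hi, hsx]
    linear_combination (μ / 2) * hq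
  have e3 : ⟪G xj - G xi, xj - xi⟫ = ip := by
    rw [hip, ← inner_neg_neg (𝕜 := ℝ)]; congr 1 <;> abel
  rw [e1, e2] at hbreg
  rw [ge_iff_le, e3]
  have halg : 1 / (2 * (1 - μ / L)) * ((1 / L) * sg + μ * sx - (2 * μ / L) * ip) =
      μ / 2 * sx + 1 / (2 * (L - μ)) * (sg - 2 * μ * ip + μ ^ 2 * sx) := by
    have hL0 : L ≠ 0 := ne_of_gt hL
    have hK0 : L - μ ≠ 0 := ne_of_gt hKpos
    have h1 : 1 - μ / L = (L - μ) / L := by field_simp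
    rw [h1]
    field_simp
    ring
  rw [halg]
  linarith [hbreg]
/-- The `F_{μ,L}` interpolation inequality between points `xi` and `xj` for `f`. -/
def InterpPt {n : ℕ} (μ L : ℝ) (f : EuclideanSpace ℝ (Fin n) → ℝ)
    (xi xj : EuclideanSpace ℝ (Fin n)) : Prop :=
  f xi - f xj - ⟪gradient f xj, xi - xj⟫ ≥ 1 / (2 * (1 - μ / L)) *
    ((1 / L) * ‖gradient f xi - gradient f xj‖ ^ 2 + μ * ‖xi - xj‖ ^ 2 -
      (2 * μ / L) * ⟪gradient f xj - gradient f xi, xj - xi⟫)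

theorem stmt15 {n : ℕ} (μ L : ℝ) (hμ : 0 < μ) (hμL : μ < L)
    (f : EuclideanSpace ℝ (Fin n) → ℝ) (hf : SmoothStronglyConvex μ L f)
    (xstar : EuclideanSpace ℝ (Fin n)) (hmin : ∀ y, f xstar ≤ f y)
    (N : ℕ) (x : ℕ → EuclideanSpace ℝ (Fin n))
    (hiter : ∀ i : ℕ, i < N → ∃ γ : ℝ,
      (∀ γ' : ℝ, f (x i - γ • gradient f (x i)) ≤ f (x i - γ' • gradient f (x i))) ∧
      x (i + 1) = x i - γ • gradient f (x i)) :
    gradient f xstar = 0 ∧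
    (∀ i : ℕ, i < N →
      ⟪gradient f (x (i + 1)), x (i + 1) - x i⟫ = 0 ∧
      ⟪gradient f (x (i + 1)), gradient f (x i)⟫ = 0) ∧
    (∀ i j : ℕ, i ≤ N → j ≤ N → InterpPt μ L f (x i) (x j)) ∧
    (∀ i : ℕ, i ≤ N → InterpPt μ L f (x i) xstar ∧ InterpPt μ L f xstar (x i)) := by
  obtain ⟨hf1, hf2, hf3⟩ := hf
  have hdiff : Differentiable ℝ f := hf1.differentiable one_ne_zero
  have hinterp : ∀ a b : EuclideanSpace ℝ (Fin n), InterpPt μ L f a b := by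
    intro a b
    exact interp_general hμ hμL hf1 hf2 hf3 a b
  refine ⟨?_, ?_, fun i j _ _ => hinterp _ _, fun i _ => ⟨hinterp _ _, hinterp _ _⟩⟩
  · have hloc : IsLocalMin f xstar := Filter.Eventually.of_forall hmin
    rw [gradient, hloc.fderiv_eq_zero, map_zero]
  · intro i hi
    obtain ⟨γ, hγmin, hγx⟩ := hiter i hi
    set gi := gradient f (x i) with hgi
    have hder : HasDerivAt (fun γ' : ℝ => f (x i - γ' • gi)) ⟪gradient f (x (i+1)), -gi⟫ γ := by
      have h1 : HasDerivAt (fun γ' : ℝ => f (x i + γ' • (-gi)))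
          ⟪gradient f (x i + γ • (-gi)), -gi⟫ γ :=
        line_hasDerivAt (x i) (-gi) γ (hdiff _).hasGradientAt
      have heq : (fun γ' : ℝ => f (x i + γ' • (-gi))) = fun γ' : ℝ => f (x i - γ' • gi) := by
        funext t; rw [smul_neg, ← sub_eq_add_neg]
      have heq2 : x i + γ • (-gi) = x (i + 1) := by
        rw [smul_neg, ← sub_eq_add_neg, ← hγx]
      rw [heq, heq2] at h1
      exact h1
    have hloc : IsLocalMin (fun γ' : ℝ => f (x i - γ' • gi)) γ := by
      apply Filter.Eventually.of_forall
      intro t; exact hγmin t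
    have hzero : ⟪gradient f (x (i+1)), -gi⟫ = 0 := hloc.hasDerivAt_eq_zero hder
    have hzero' : ⟪gradient f (x (i+1)), gi⟫ = 0 := by
      rw [inner_neg_right] at hzero; linarith
    constructor
    · have hdx : x (i+1) - x i = -(γ • gi) := by rw [hγx]; abel
      rw [hdx, inner_neg_right, real_inner_smul_right, hzero']
      ring
    · exact hzero'
end

section
/- Let f ∈ F_{μ,L}(ℝ^n) with 0 < μ < L. Then for any two points x, y ∈ ℝ^n: f(x) - f(y) - ⟨∇f(y), x - y⟩ ≥ (1/(2(1-μ/L)))((1/L)‖∇f(x)-∇f(y)‖² + μ‖x-y‖² - (2μ/L)⟨∇f(y)-∇f(x), y-x⟩). -/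
open RealInnerProductSpace Set InnerProductSpace

variable {E : Type*} [NormedAddCommGroup E] [InnerProductSpace ℝ E] [CompleteSpace E]

/-- gradient of c/2 * ‖·‖² -/
lemma aux_hasGradientAt_norm_sq (c : ℝ) (z : E) :
    HasGradientAt (fun w : E => c / 2 * ‖w‖ ^ 2) (c • z) z := by
  rw [hasGradientAt_iff_hasFDerivAt]
  have h1 : HasFDerivAt (fun w : E => ⟪w, w⟫)
      ((fderivInnerCLM ℝ (z, z)).comp
        (((ContinuousLinearMap.id ℝ E)).prod ((ContinuousLinearMap.id ℝ E)))) z :=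
    (hasFDerivAt_id z).inner ℝ (hasFDerivAt_id z)
  have h2 := h1.const_mul (c / 2)
  simp only [real_inner_self_eq_norm_sq] at h2
  refine h2.congr_fderiv ?_
  ext w
  simp [fderivInnerCLM_apply, toDual_apply_apply, real_inner_smul_left, real_inner_comm]
  ring

/-- first-order condition for convexity -/
lemma aux_first_order {h : E → ℝ} (hc : ConvexOn ℝ Set.univ h) {a b : E} {ga : E}
    (hg : HasGradientAt h ga a) : h a + ⟪ga, b - a⟫ ≤ h b := by
  rcases eq_or_ne a b with rfl | hab
  · simp
  set c : ℝ → E := fun t => t • (b - a) + a with hc_def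
  have hφconv : ConvexOn ℝ Set.univ (h ∘ c) := by
    have := hc.comp_affineMap (AffineMap.lineMap a b : ℝ →ᵃ[ℝ] E)
    simpa [Function.comp_def, AffineMap.lineMap_apply, hc_def] using this
  have hcurve : HasDerivAt c (b - a) 0 := by
    simpa [hc_def] using ((hasDerivAt_id (0:ℝ)).smul_const (b - a)).add_const a
  have hc0 : c 0 = a := by simp [hc_def]
  have hderiv : HasDerivAt (h ∘ c) ⟪ga, b - a⟫ 0 := by
    have := (hc0 ▸ hg.hasFDerivAt).comp_hasDerivAt 0 hcurve
    simpa [toDual_apply_apply] using this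
  have hslope := hφconv.le_slope_of_hasDerivWithinAt (mem_univ (0:ℝ)) (mem_univ (1:ℝ))
    zero_lt_one hderiv.hasDerivWithinAt
  rw [slope_def_field] at hslope
  have h0 : (h ∘ c) 0 = h a := by simp [hc_def]
  have h1 : (h ∘ c) 1 = h b := by simp [hc_def]
  rw [h0, h1] at hslope
  simp at hslope
  linarith

/-- descent lemma -/
lemma aux_descent_s16 {h : E → ℝ} {K : ℝ} (hK : 0 ≤ K) {g' : E → E}
    (hg : ∀ p, HasGradientAt h (g' p) p)
    (hlip : ∀ p q, ‖g' p - g' q‖ ≤ K * ‖p - q‖) (z w : E) :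
    h w ≤ h z + ⟪g' z, w - z⟫ + K / 2 * ‖w - z‖ ^ 2 := by
  set d : E := w - z with hd
  set c : ℝ → E := fun t => t • d + z with hcdef
  have hcurve : ∀ t : ℝ, HasDerivAt c d t := fun t => by
    simpa [hcdef] using ((hasDerivAt_id t).smul_const d).add_const z
  have hφ : ∀ t : ℝ, HasDerivAt (fun s => h (c s)) ⟪g' (c t), d⟫ t := fun t => by
    have := ((hg (c t)).hasFDerivAt).comp_hasDerivAt t (hcurve t)
    simpa [toDual_apply_apply, Function.comp_def] using this
  have hgcont : Continuous g' :=
    (LipschitzWith.of_dist_le_mul (K := ⟨K, hK⟩) (fun p q => by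
        rw [dist_eq_norm, dist_eq_norm]; exact hlip p q)).continuous
  have hφ'cont : Continuous fun t : ℝ => ⟪g' (c t), d⟫ := by
    exact (hgcont.comp (by continuity)).inner continuous_const
  have hFTC : (∫ t in (0:ℝ)..1, ⟪g' (c t), d⟫) = h (c 1) - h (c 0) := by
    exact intervalIntegral.integral_eq_sub_of_hasDerivAt
      (fun t _ => hφ t) (hφ'cont.intervalIntegrable 0 1)
  have hmono : (∫ t in (0:ℝ)..1, (⟪g' (c t), d⟫ - ⟪g' (c 0), d⟫)) ≤
      ∫ t in (0:ℝ)..1, K * ‖d‖ ^ 2 * t := by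
    apply intervalIntegral.integral_mono_on zero_le_one
    · exact ((hφ'cont.sub continuous_const).intervalIntegrable 0 1)
    · exact ((continuous_const.mul continuous_id).intervalIntegrable 0 1)
    · intro t ht
      have h1 : ⟪g' (c t), d⟫ - ⟪g' (c 0), d⟫ = ⟪g' (c t) - g' (c 0), d⟫ := by
        rw [inner_sub_left]
      rw [h1]
      calc ⟪g' (c t) - g' (c 0), d⟫ ≤ ‖g' (c t) - g' (c 0)‖ * ‖d‖ := real_inner_le_norm _ _
        _ ≤ K * ‖c t - c 0‖ * ‖d‖ := by
            exact mul_le_mul_of_nonneg_right (hlip _ _) (norm_nonneg _)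
        _ = K * ‖d‖ ^ 2 * t := by
            have : c t - c 0 = t • d := by simp [hcdef]
            rw [this, norm_smul, Real.norm_eq_abs, abs_of_nonneg ht.1]
            ring
  have hint1 : (∫ t in (0:ℝ)..1, K * ‖d‖ ^ 2 * t) = K / 2 * ‖d‖ ^ 2 := by
    rw [intervalIntegral.integral_const_mul, integral_id]
    ring
  have hint2 : (∫ t in (0:ℝ)..1, (⟪g' (c t), d⟫ - ⟪g' (c 0), d⟫)) =
      (h (c 1) - h (c 0)) - ⟪g' (c 0), d⟫ := by
    rw [intervalIntegral.integral_sub (hφ'cont.intervalIntegrable 0 1)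
      (intervalIntegrable_const), hFTC]
    simp
  have hc0 : c 0 = z := by simp [hcdef]
  have hc1 : c 1 = w := by simp [hcdef, hd]
  simp only [hc0, hc1] at hmono hint2
  rw [hint2, hint1] at hmono
  linarith

omit [CompleteSpace E] in
lemma aux_norm_sq_expand (z w : E) :
    ‖w - z‖ ^ 2 = ‖w‖ ^ 2 - ‖z‖ ^ 2 - 2 * ⟪z, w - z⟫ := by
  rw [inner_sub_right, real_inner_self_eq_norm_sq, @norm_sub_sq_real, real_inner_comm]
  ring

theorem stmt16 {n : ℕ} (μ L : ℝ) (hμ : 0 < μ) (hμL : μ < L)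
    (f : EuclideanSpace ℝ (Fin n) → ℝ) (hf : SmoothStronglyConvex μ L f)
    (x y : EuclideanSpace ℝ (Fin n)) :
    f x - f y - ⟪gradient f y, x - y⟫ ≥ 1 / (2 * (1 - μ / L)) *
      ((1 / L) * ‖gradient f x - gradient f y‖ ^ 2 + μ * ‖x - y‖ ^ 2 -
        (2 * μ / L) * ⟪gradient f y - gradient f x, y - x⟫) := by
  obtain ⟨hC1, hconv, hlip⟩ := hf
  have hL : (0:ℝ) < L := hμ.trans hμL
  have hKpos : (0:ℝ) < L - μ := by linarith
  have hdiff : Differentiable ℝ f := hC1.differentiable one_ne_zero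
  have hgradf : ∀ p, HasGradientAt f (gradient f p) p := fun p => (hdiff p).hasGradientAt
  -- gradient of the shifted function
  have hg' : ∀ p, HasGradientAt (fun z : EuclideanSpace ℝ (Fin n) => f z - μ / 2 * ‖z‖ ^ 2)
      (gradient f p - μ • p) p := by
    intro p
    have h1 := (hgradf p).hasFDerivAt
    have h2 := (aux_hasGradientAt_norm_sq μ p).hasFDerivAt
    rw [hasGradientAt_iff_hasFDerivAt, map_sub]
    exact h1.sub h2
  -- descent lemma for f
  have hdesc_f : ∀ z w, f w ≤ f z + ⟪gradient f z, w - z⟫ + L / 2 * ‖w - z‖ ^ 2 :=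
    aux_descent_s16 hL.le hgradf hlip
  -- descent lemma for the shifted function
  have hdesc_g : ∀ z w : EuclideanSpace ℝ (Fin n),
      f w - μ / 2 * ‖w‖ ^ 2 ≤ (f z - μ / 2 * ‖z‖ ^ 2) + ⟪gradient f z - μ • z, w - z⟫ +
        (L - μ) / 2 * ‖w - z‖ ^ 2 := by
    intro z w
    have h1 := hdesc_f z w
    have h2 : ⟪gradient f z - μ • z, w - z⟫ = ⟪gradient f z, w - z⟫ - μ * ⟪z, w - z⟫ := by
      rw [inner_sub_left, real_inner_smul_left]
    have h3 := aux_norm_sq_expand z w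
    have hmul : μ / 2 * ‖w‖ ^ 2 - μ / 2 * ‖z‖ ^ 2 - μ * ⟪z, w - z⟫ = μ / 2 * ‖w - z‖ ^ 2 := by
      linear_combination (-(μ / 2)) * h3
    linarith [h1, h2, hmul]
  -- first-order condition for the shifted function
  have hfo_g : ∀ a b : EuclideanSpace ℝ (Fin n),
      (f a - μ / 2 * ‖a‖ ^ 2) + ⟪gradient f a - μ • a, b - a⟫ ≤ f b - μ / 2 * ‖b‖ ^ 2 := by
    intro a b
    have := aux_first_order (b := b) hconv (hg' a)
    simpa using this
  -- cocoercivity argument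
  set u : EuclideanSpace ℝ (Fin n) := gradient f x - gradient f y with hu
  set d : EuclideanSpace ℝ (Fin n) := x - y with hd
  set K : ℝ := L - μ with hKdef
  set v : EuclideanSpace ℝ (Fin n) := u - μ • d with hv
  have hvgrad : (gradient f x - μ • x) - (gradient f y - μ • y) = v := by
    rw [hv, hu, hd, smul_sub]; abel
  set w : EuclideanSpace ℝ (Fin n) := x - K⁻¹ • v with hw
  have h1 := hfo_g y w
  have h2 := hdesc_g x w
  have hwx : w - x = -(K⁻¹ • v) := by rw [hw]; abel
  have hwy : w - y = d - K⁻¹ • v := by rw [hw, hd]; abel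
  have e1 : ⟪gradient f x - μ • x, w - x⟫ = -(K⁻¹ * ⟪gradient f x - μ • x, v⟫) := by
    rw [hwx, inner_neg_right, real_inner_smul_right]
  have e2 : ⟪gradient f y - μ • y, w - y⟫ =
      ⟪gradient f y - μ • y, d⟫ - K⁻¹ * ⟪gradient f y - μ • y, v⟫ := by
    rw [hwy, inner_sub_right, real_inner_smul_right]
  have e3 : ‖w - x‖ ^ 2 = K⁻¹ ^ 2 * ‖v‖ ^ 2 := by
    rw [hwx, norm_neg, norm_smul, Real.norm_eq_abs, abs_of_pos (inv_pos.mpr hKpos), mul_pow]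
  have e4 : ⟪gradient f x - μ • x, v⟫ - ⟪gradient f y - μ • y, v⟫ = ‖v‖ ^ 2 := by
    rw [← inner_sub_left, hvgrad, real_inner_self_eq_norm_sq]
  have hcoco : (f x - μ / 2 * ‖x‖ ^ 2) - (f y - μ / 2 * ‖y‖ ^ 2) -
      ⟪gradient f y - μ • y, d⟫ ≥ 1 / (2 * K) * ‖v‖ ^ 2 := by
    rw [e2] at h1
    rw [e1, e3] at h2
    have hKne : K ≠ 0 := ne_of_gt hKpos
    have hcalc : K / 2 * (K⁻¹ ^ 2 * ‖v‖ ^ 2) = 1 / (2 * K) * ‖v‖ ^ 2 := by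
      field_simp
    rw [hcalc] at h2
    have e5 : K⁻¹ * ⟪gradient f x - μ • x, v⟫ - K⁻¹ * ⟪gradient f y - μ • y, v⟫
        = K⁻¹ * ‖v‖ ^ 2 := by rw [← mul_sub, e4]
    have hhalf : K⁻¹ * ‖v‖ ^ 2 = 1 / (2 * K) * ‖v‖ ^ 2 + 1 / (2 * K) * ‖v‖ ^ 2 := by
      field_simp
      ring
    linarith [h1, h2, e5, hhalf]
  -- now unfold everything
  have hNv : ‖v‖ ^ 2 = ‖u‖ ^ 2 - 2 * μ * ⟪u, d⟫ + μ ^ 2 * ‖d‖ ^ 2 := by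
    rw [hv, @norm_sub_sq_real, real_inner_smul_right, norm_smul, Real.norm_eq_abs,
      abs_of_pos hμ, mul_pow]
    ring
  have hgyd : ⟪gradient f y - μ • y, d⟫ = ⟪gradient f y, d⟫ - μ * ⟪y, d⟫ := by
    rw [inner_sub_left, real_inner_smul_left]
  have hxy2 : ‖x‖ ^ 2 - ‖y‖ ^ 2 - 2 * ⟪y, d⟫ = ‖d‖ ^ 2 := by
    have := aux_norm_sq_expand y x
    rw [← hd] at this
    linarith
  have hP : ⟪gradient f y - gradient f x, y - x⟫ = ⟪u, d⟫ := by
    have h1 : gradient f y - gradient f x = -u := by rw [hu]; abel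
    have h2 : y - x = -d := by rw [hd]; abel
    rw [h1, h2, inner_neg_neg]
  rw [hP]
  have key : f x - f y - ⟪gradient f y, d⟫ - μ / 2 * ‖d‖ ^ 2 ≥
      1 / (2 * K) * (‖u‖ ^ 2 - 2 * μ * ⟪u, d⟫ + μ ^ 2 * ‖d‖ ^ 2) := by
    rw [← hNv]
    rw [hgyd] at hcoco
    have hmul : μ / 2 * ‖x‖ ^ 2 - μ / 2 * ‖y‖ ^ 2 - μ * ⟪y, d⟫ = μ / 2 * ‖d‖ ^ 2 := by
      linear_combination (μ / 2) * hxy2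
    linarith [hcoco, hmul]
  have heq : 1 / (2 * (1 - μ / L)) * ((1 / L) * ‖u‖ ^ 2 + μ * ‖d‖ ^ 2 - (2 * μ / L) * ⟪u, d⟫) =
      1 / (2 * K) * (‖u‖ ^ 2 - 2 * μ * ⟪u, d⟫ + μ ^ 2 * ‖d‖ ^ 2) + μ / 2 * ‖d‖ ^ 2 := by
    have hLne : L ≠ 0 := ne_of_gt hL
    have hKne : K ≠ 0 := ne_of_gt hKpos
    have h1 : 1 - μ / L = K / L := by rw [hKdef]; field_simp
    rw [h1]
    field_simp
    ring
  rw [heq]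
  linarith [key]
end
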